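/- arXiv:1108.2948 — 14 statements merged into one kernel-verified Lean document; each statement's English description precedes it below -/
import Mathlib

section
/- Let 0 < α < β < π and let x = e^{iα}, y = e^{iβ} be points of the unit circle in the upper half plane H². Let δ ∈ (0, π) be defined by cos δ = cos((β+α)/2)/cos((β−α)/2), and set z = e^{iδ}. Then z is the hyperbolic midpoint of x and y, i.e., ρ(x,z) = ρ(z,y) = ρ(x,y)/2. -/
open Complex ComplexConjugate

/-- Inverse hyperbolic cosine. -/
noncomputable def arcosh (c : ℝ) : ℝ := Real.log (c + Real.sqrt (c ^ 2 - 1))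

/-- Hyperbolic distance in the upper half plane `H² = {z : Im z > 0}`, determined by
`cosh (rhoH x y) = 1 + |x - y|^2 / (2 * Im x * Im y)`. -/
noncomputable def rhoH (x y : ℂ) : ℝ :=
  arcosh (1 + ‖x - y‖ ^ 2 / (2 * x.im * y.im))

/-- Hyperbolic distance in the unit disk `B² = {z : |z| < 1}`, determined by
`sinh (rhoB x y / 2) = |x - y| / (sqrt (1 - |x|^2) * sqrt (1 - |y|^2))`. -/
noncomputable def rhoB (x y : ℂ) : ℝ :=
  2 * Real.arsinh (‖x - y‖ /
    (Real.sqrt (1 - ‖x‖ ^ 2) * Real.sqrt (1 - ‖y‖ ^ 2)))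

/-- The Euclidean line through the points `p` and `q`, as a subset of `ℂ`. -/
def lineThrough (p q : ℂ) : Set ℂ := {z : ℂ | ∃ t : ℝ, z = p + t • (q - p)}

/-- The real inner product on `ℂ ≅ ℝ²`. -/
def dotR (p q : ℂ) : ℝ := p.re * q.re + p.im * q.im

lemma arcosh_double {c : ℝ} (hc : 1 ≤ c) : arcosh (2*c^2 - 1) = 2 * arcosh c := by
  have h1 : (0:ℝ) ≤ c^2 - 1 := by nlinarith
  have hs : Real.sqrt ((2*c^2-1)^2 - 1) = 2*c*Real.sqrt (c^2-1) := by
    rw [show (2*c^2-1)^2 - 1 = (2*c)^2 * (c^2-1) by ring, Real.sqrt_mul (by positivity),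
      Real.sqrt_sq (by linarith)]
  have hss := Real.sq_sqrt h1
  have h2 : 2*c^2 - 1 + 2*c*Real.sqrt (c^2-1) = (c + Real.sqrt (c^2-1))^2 := by
    nlinarith [hss]
  unfold arcosh
  rw [hs, h2, Real.log_pow]
  push_cast
  ring

lemma rhoH_exp (a b : ℝ) :
    rhoH (Complex.exp (a * Complex.I)) (Complex.exp (b * Complex.I)) =
    arcosh (1 + ((Real.cos a - Real.cos b)^2 + (Real.sin a - Real.sin b)^2) /
      (2 * Real.sin a * Real.sin b)) := by
  have habs : ‖Complex.exp (↑a * Complex.I) - Complex.exp (↑b * Complex.I)‖ ^ 2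
      = (Real.cos a - Real.cos b)^2 + (Real.sin a - Real.sin b)^2 := by
    rw [Complex.sq_norm, Complex.normSq_apply]
    simp only [Complex.sub_re, Complex.sub_im, Complex.exp_ofReal_mul_I_re,
      Complex.exp_ofReal_mul_I_im]
    ring
  rw [rhoH, habs, Complex.exp_ofReal_mul_I_im, Complex.exp_ofReal_mul_I_im]

set_option maxHeartbeats 1000000 in
/-- For `x = e^{iα}`, `y = e^{iβ}` with `0 < α < β < π`, the point `z = e^{iδ}` with
`δ ∈ (0, π)` and `cos δ = cos ((β+α)/2) / cos ((β-α)/2)` is the hyperbolic midpoint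
of `x` and `y` in the upper half plane. -/
theorem midpoint_on_unit_circle_H2 (α β δ : ℝ)
    (hα : 0 < α) (hαβ : α < β) (hβ : β < Real.pi)
    (x y z : ℂ) (hx : x = Complex.exp (α * Complex.I))
    (hy : y = Complex.exp (β * Complex.I))
    (hδ : δ ∈ Set.Ioo 0 Real.pi)
    (hcos : Real.cos δ = Real.cos ((β + α) / 2) / Real.cos ((β - α) / 2))
    (hz : z = Complex.exp (δ * Complex.I)) :
    rhoH x z = rhoH z y ∧ rhoH z y = rhoH x y / 2 := by
  obtain ⟨hδ0, hδπ⟩ := hδ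
  rw [hx, hy, hz, rhoH_exp, rhoH_exp, rhoH_exp]
  set sα := Real.sin α with hsadef
  set cα := Real.cos α with hcadef
  set sβ := Real.sin β with hsbdef
  set cβ := Real.cos β with hcbdef
  set sδ := Real.sin δ with hsddef
  set cδ := Real.cos δ with hcddef
  have hsα : 0 < sα := Real.sin_pos_of_pos_of_lt_pi hα (hαβ.trans hβ)
  have hsβ : 0 < sβ := Real.sin_pos_of_pos_of_lt_pi (hα.trans hαβ) hβ
  have hsδ : 0 < sδ := Real.sin_pos_of_pos_of_lt_pi hδ0 hδπ
  have pα : sα^2 + cα^2 = 1 := Real.sin_sq_add_cos_sq α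
  have pβ : sβ^2 + cβ^2 = 1 := Real.sin_sq_add_cos_sq β
  have pδ : sδ^2 + cδ^2 = 1 := Real.sin_sq_add_cos_sq δ
  have hπ := Real.pi_pos
  have hd : 0 < Real.cos ((β - α) / 2) := by
    apply Real.cos_pos_of_mem_Ioo
    constructor <;> [linarith; linarith]
  have hcos' : cδ * Real.cos ((β - α) / 2) = Real.cos ((β + α) / 2) := by
    rw [hcos, div_mul_cancel₀ _ hd.ne']
  have h1 := Real.cos_sq ((β - α)/2)
  rw [show 2*((β-α)/2) = β - α by ring] at h1
  have h2 := Real.cos_add_cos β α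
  have hsub := Real.cos_sub β α
  set Q : ℝ := 1 + cα*cβ + sα*sβ with hQdef
  have R : cδ * Q = cα + cβ := by
    linear_combination (-2*cδ)*h1 - h2 - cδ*hsub + 2*Real.cos ((β-α)/2) * hcos'
  have hQpos : 0 < Q := by nlinarith [h1, hsub, hd]
  have hQ2 : Q^2 - (cα+cβ)^2 = 2*sα*sβ*Q := by
    linear_combination (cβ^2 - 1)*pα - sα^2*pβ
  have F : sδ^2 * Q = 2*sα*sβ := by
    have hF : (sδ^2 * Q) * Q = (2*sα*sβ) * Q := by
      linear_combination Q^2*pδ + hQ2 - (cδ*Q + cα + cβ)*R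
    exact mul_right_cancel₀ hQpos.ne' hF
  have G : (1 - cβ*cδ)*Q = sβ*(sα+sβ) := by
    linear_combination (-cβ)*R - pβ
  have H : (1 - cα*cβ + sα*sβ)*Q = (sα+sβ)^2 := by
    linear_combination (sβ^2 - 1)*pα - cα^2*pβ
  have N1 : (1 - cα*cδ)*sβ = (1 - cβ*cδ)*sα := by
    have hN : ((1 - cα*cδ)*sβ)*Q = ((1 - cβ*cδ)*sα)*Q := by
      linear_combination (cβ*sα - cα*sβ)*R - sβ*pα + sα*pβ
    exact mul_right_cancel₀ hQpos.ne' hN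
  have hA1 : 1 + ((cα - cδ)^2 + (sα - sδ)^2) / (2*sα*sδ)
      = 1 + ((cδ - cβ)^2 + (sδ - sβ)^2) / (2*sδ*sβ) := by
    have h : ((cα - cδ)^2 + (sα - sδ)^2) / (2*sα*sδ)
        = ((cδ - cβ)^2 + (sδ - sβ)^2) / (2*sδ*sβ) := by
      rw [div_eq_div_iff (by positivity) (by positivity)]
      linear_combination 4*sδ*N1 + (2*sδ*sβ - 2*sα*sδ)*pδ + 2*sδ*sβ*pα - 2*sα*sδ*pβ
    rw [h]
  have hA2 : 1 + ((cδ - cβ)^2 + (sδ - sβ)^2) / (2*sδ*sβ) = (1 - cβ*cδ)/(sβ*sδ) := by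
    have hnum : (cδ - cβ)^2 + (sδ - sβ)^2 = 2 - 2*(cβ*cδ + sβ*sδ) := by
      linear_combination pβ + pδ
    rw [hnum]
    field_simp
    ring
  have hA3 : 1 + ((cα - cβ)^2 + (sα - sβ)^2) / (2*sα*sβ) = (1 - cα*cβ)/(sα*sβ) := by
    have hnum : (cα - cβ)^2 + (sα - sβ)^2 = 2 - 2*(cα*cβ + sα*sβ) := by
      linear_combination pα + pβ
    rw [hnum]
    field_simp
    ring
  have hge1 : 1 ≤ (1 - cβ*cδ)/(sβ*sδ) := by
    rw [← hA2]
    have h0 : 0 ≤ ((cδ - cβ)^2 + (sδ - sβ)^2) / (2*sδ*sβ) := by positivity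
    linarith
  have T : (1 - cα*cβ) * (sβ*sδ)^2 = (2*(1 - cβ*cδ)^2 - (sβ*sδ)^2) * (sα*sβ) := by
    have hT : ((1 - cα*cβ) * (sβ*sδ)^2) * Q^2
        = ((2*(1 - cβ*cδ)^2 - (sβ*sδ)^2) * (sα*sβ)) * Q^2 := by
      linear_combination (((1-cα*cβ) + sα*sβ)*sβ^2*Q) * F
        + (-2*sα*sβ*((1-cβ*cδ)*Q + sβ*(sα+sβ))) * G + (2*sα*sβ^3) * H
    exact mul_right_cancel₀ (by positivity) hT
  have hdbl : (1 - cα*cβ)/(sα*sβ) = 2*((1 - cβ*cδ)/(sβ*sδ))^2 - 1 := by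
    have h2' : 2*((1 - cβ*cδ)/(sβ*sδ))^2 - 1 = (2*(1 - cβ*cδ)^2 - (sβ*sδ)^2)/((sβ*sδ)^2) := by
      field_simp
    rw [h2', div_eq_div_iff (by positivity) (by positivity)]
    linear_combination T
  constructor
  · exact congrArg arcosh hA1
  · rw [hA2, hA3, hdbl, arcosh_double hge1]
    ring
end

section
/- Let 0 < α < β < π with α + β ≠ π, let x = e^{iα}, y = e^{iβ}, and let z = e^{iδ} with δ ∈ (0,π), cos δ = cos((β+α)/2)/cos((β−α)/2), be the hyperbolic midpoint of x and y in H². Let w be the intersection of the Euclidean line through x and y with the real axis. Then the Euclidean line through w and z is tangent to the unit circle at z; equivalently, (Re w)(Re z) = 1. -/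
open Complex ComplexConjugate

/-- If `w` is the intersection of the Euclidean line through `x = e^{iα}` and `y = e^{iβ}`
with the real axis, and `z` is the hyperbolic midpoint of `x` and `y`, then the line
through `w` and `z` is tangent to the unit circle at `z` (it is perpendicular to the
radius `[0, z]`); equivalently `Re w * Re z = 1`. -/
theorem tangent_line_through_w_and_midpoint (α β δ : ℝ)
    (hα : 0 < α) (hαβ : α < β) (hβ : β < Real.pi) (hne : α + β ≠ Real.pi)
    (x y z : ℂ) (hx : x = Complex.exp (α * Complex.I))
    (hy : y = Complex.exp (β * Complex.I))
    (hδ : δ ∈ Set.Ioo 0 Real.pi)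
    (hcos : Real.cos δ = Real.cos ((β + α) / 2) / Real.cos ((β - α) / 2))
    (hz : z = Complex.exp (δ * Complex.I))
    (w : ℂ) (hw1 : w ∈ lineThrough x y) (hw2 : w.im = 0) :
    dotR (w - z) z = 0 ∧ w.re * z.re = 1 := by

  obtain ⟨t, hwt⟩ := hw1
  -- half-angle abbreviations
  set a := Real.sin ((β + α) / 2) with ha
  set b := Real.cos ((β + α) / 2) with hb
  set s := Real.sin ((β - α) / 2) with hs
  set c := Real.cos ((β - α) / 2) with hc
  have hpi := Real.pi_pos
  have hspos : 0 < s := Real.sin_pos_of_pos_of_lt_pi (by linarith) (by linarith)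
  have hcpos : 0 < c := Real.cos_pos_of_mem_Ioo ⟨by linarith, by linarith⟩
  have hbne : b ≠ 0 := by
    intro h
    obtain ⟨n, hn⟩ := (Real.cos_eq_zero_iff).mp h
    have h1 : (0:ℝ) < (β + α) / 2 := by linarith
    have h2 : (β + α) / 2 < Real.pi := by linarith
    have hn0 : n = 0 := by
      rcases lt_trichotomy n 0 with h' | h' | h'
      · exfalso
        have hle : n ≤ -1 := by omega
        have : (n : ℝ) ≤ -1 := by exact_mod_cast hle
        nlinarith [hn]
      · exact h'
      · exfalso
        have : (1:ℝ) ≤ (n : ℝ) := by exact_mod_cast h'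
        nlinarith [hn]
    rw [hn0] at hn
    norm_num at hn
    apply hne
    linarith
  have hxre : x.re = Real.cos α := by rw [hx]; exact Complex.exp_ofReal_mul_I_re α
  have hxim : x.im = Real.sin α := by rw [hx]; exact Complex.exp_ofReal_mul_I_im α
  have hyre : y.re = Real.cos β := by rw [hy]; exact Complex.exp_ofReal_mul_I_re β
  have hyim : y.im = Real.sin β := by rw [hy]; exact Complex.exp_ofReal_mul_I_im β
  have hzre : z.re = Real.cos δ := by rw [hz]; exact Complex.exp_ofReal_mul_I_re δ
  have hzim : z.im = Real.sin δ := by rw [hz]; exact Complex.exp_ofReal_mul_I_im δ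
  -- express sin/cos of α and β via half-angles
  have hα' : α = (β + α) / 2 - (β - α) / 2 := by ring
  have hβ' : β = (β + α) / 2 + (β - α) / 2 := by ring
  have hsinα : Real.sin α = a * c - b * s := by rw [hα', Real.sin_sub]
  have hcosα : Real.cos α = b * c + a * s := by rw [hα', Real.cos_sub]
  have hsinβ : Real.sin β = a * c + b * s := by rw [hβ', Real.sin_add]
  have hcosβ : Real.cos β = b * c - a * s := by rw [hβ', Real.cos_add]
  have hpy : a ^ 2 + b ^ 2 = 1 := Real.sin_sq_add_cos_sq _
  -- coordinates of w
  have hwre : w.re = Real.cos α + t * (Real.cos β - Real.cos α) := by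
    rw [hwt]; simp [hxre, hyre]
  have him : Real.sin α + t * (Real.sin β - Real.sin α) = 0 := by
    have : w.im = Real.sin α + t * (Real.sin β - Real.sin α) := by
      rw [hwt]; simp [hxim, hyim]
    rw [← this, hw2]
  rw [hsinα, hsinβ] at him
  have ht2 : t * (2 * b * s) = b * s - a * c := by linear_combination him
  have key : w.re * z.re = 1 := by
    rw [hwre, hzre, hcos, hcosα, hcosβ]
    have hbs : b * s ≠ 0 := mul_ne_zero hbne (ne_of_gt hspos)
    have hcne : c ≠ 0 := ne_of_gt hcpos
    have key2 : (b * c + a * s + t * (b * c - a * s - (b * c + a * s))) * b = c := by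
      linear_combination (-a) * ht2 + c * hpy
    field_simp
    linear_combination key2
  refine ⟨?_, key⟩
  have hz1 : z.re ^ 2 + z.im ^ 2 = 1 := by
    rw [hzre, hzim]
    exact Real.cos_sq_add_sin_sq δ
  simp only [dotR, Complex.sub_re, Complex.sub_im]
  linear_combination key - hz1 + z.im * hw2
end

section
/- Let 0 < α < β < π, let x = e^{iα}, y = e^{iβ}, and let z = e^{iδ} with δ ∈ (0,π), cos δ = cos((β+α)/2)/cos((β−α)/2), be the hyperbolic midpoint of x and y in H². Let v be the intersection point of the Euclidean line through x and 1 with the Euclidean line through y and −1 (here 1 and −1 are the endpoints on the real axis of the unit circle arc containing x and y). Then Re v = Re z, i.e., the line through v and z is orthogonal to the real axis ∂H². -/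
open Complex ComplexConjugate

/-- If `v` is the intersection of the line through `x = e^{iα}` and `1` with the line
through `y = e^{iβ}` and `-1`, and `z` is the hyperbolic midpoint of `x` and `y`, then
`Re v = Re z`, i.e. the line through `v` and `z` is orthogonal to the real axis. -/
theorem vertical_line_through_v_and_midpoint (α β δ : ℝ)
    (hα : 0 < α) (hαβ : α < β) (hβ : β < Real.pi)
    (x y z : ℂ) (hx : x = Complex.exp (α * Complex.I))
    (hy : y = Complex.exp (β * Complex.I))
    (hδ : δ ∈ Set.Ioo 0 Real.pi)
    (hcos : Real.cos δ = Real.cos ((β + α) / 2) / Real.cos ((β - α) / 2))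
    (hz : z = Complex.exp (δ * Complex.I))
    (v : ℂ) (hv1 : v ∈ lineThrough x 1) (hv2 : v ∈ lineThrough y (-1)) :
    v.re = z.re := by
  obtain ⟨t, ht⟩ := hv1
  obtain ⟨s, hs⟩ := hv2
  subst hx hy hz
  have hπ := Real.pi_pos
  set u := α / 2 with hu
  set w := β / 2 with hw
  have hsu : 0 < Real.sin u := Real.sin_pos_of_pos_of_lt_pi (by linarith) (by rw [hu]; linarith)
  have hcu : 0 < Real.cos u := Real.cos_pos_of_mem_Ioo ⟨by linarith, by rw [hu]; linarith⟩
  have hsw : 0 < Real.sin w := Real.sin_pos_of_pos_of_lt_pi (by linarith) (by rw [hw]; linarith)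
  have hcw : 0 < Real.cos w := Real.cos_pos_of_mem_Ioo ⟨by linarith, by rw [hw]; linarith⟩
  have hcwu : 0 < Real.cos (w - u) :=
    Real.cos_pos_of_mem_Ioo ⟨by rw [hu, hw]; linarith, by rw [hu, hw]; linarith⟩
  have hαu : α = 2 * u := by rw [hu]; ring
  have hβw : β = 2 * w := by rw [hw]; ring
  -- coordinates
  have h1 : v.re = Real.cos α + t * (1 - Real.cos α) := by
    rw [ht]; simp [Complex.exp_ofReal_mul_I_re, Complex.exp_ofReal_mul_I_im]
  have h2 : v.im = Real.sin α - t * Real.sin α := by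
    rw [ht]; simp [Complex.exp_ofReal_mul_I_re, Complex.exp_ofReal_mul_I_im]; try ring
  have h3 : v.re = Real.cos β + s * (-1 - Real.cos β) := by
    rw [hs]; simp [Complex.exp_ofReal_mul_I_re, Complex.exp_ofReal_mul_I_im]; try ring
  have h4 : v.im = Real.sin β - s * Real.sin β := by
    rw [hs]; simp [Complex.exp_ofReal_mul_I_re, Complex.exp_ofReal_mul_I_im]; try ring
  rw [hαu] at h1 h2
  rw [hβw] at h3 h4
  rw [Real.cos_two_mul] at h1 h3
  rw [Real.sin_two_mul] at h2 h4
  have hpyu : Real.sin u ^ 2 = 1 - Real.cos u ^ 2 := by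
    have := Real.sin_sq_add_cos_sq u; linarith
  have hpyw : Real.sin w ^ 2 = 1 - Real.cos w ^ 2 := by
    have := Real.sin_sq_add_cos_sq w; linarith
  have hi : (1 - t) * Real.sin u * Real.cos u = (1 - s) * Real.sin w * Real.cos w := by
    have := h2.symm.trans h4; nlinarith [this]
  have hii : (1 - t) * Real.sin u ^ 2 + (1 - s) * Real.cos w ^ 2 = 1 := by
    have := h1.symm.trans h3; linear_combination (1 - t) * hpyu - this / 2
  have key : (1 - t) * Real.sin u * (Real.sin u * Real.sin w + Real.cos u * Real.cos w)
      = Real.sin w := by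
    linear_combination Real.sin w * hii + Real.cos w * hi
  -- z.re = cos δ
  have hzre : (Complex.exp (↑δ * Complex.I)).re = Real.cos δ :=
    Complex.exp_ofReal_mul_I_re δ
  rw [hzre, hcos]
  have h1' : v.re = 1 - 2 * (1 - t) * Real.sin u ^ 2 := by rw [h1]; nlinarith [hpyu]
  have hbpa : (β + α) / 2 = w + u := by rw [hu, hw]; ring
  have hbma : (β - α) / 2 = w - u := by rw [hu, hw]; ring
  rw [hbpa, hbma, eq_div_iff (ne_of_gt hcwu)]
  rw [Real.cos_sub, Real.cos_add, h1']
  linear_combination (-2 * Real.sin u) * key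
end

section
/- Let 0 < α < β < π, let x = e^{iα}, y = e^{iβ}, and let z = e^{iδ} with δ ∈ (0,π), cos δ = cos((β+α)/2)/cos((β−α)/2), be the hyperbolic midpoint of x and y in H². Let a = i(y(1+|x|²) − x(1+|y|²))/(2(x₂y₁ − x₁y₂)), where x = x₁+ix₂, y = y₁+iy₂; then a = e^{i(β+α)/2}/cos((β−α)/2) and Re a = Re z, i.e., the line through a and z is orthogonal to the real axis ∂H². -/
open Complex ComplexConjugate

/-- For `x = e^{iα}`, `y = e^{iβ}`, the center `a` of the circle through `x`, `y`
orthogonal to the unit circle satisfies `a = e^{i(β+α)/2} / cos ((β-α)/2)` and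
`Re a = Re z`, where `z` is the hyperbolic midpoint of `x` and `y`. -/
theorem vertical_line_through_a_and_midpoint (α β δ : ℝ)
    (hα : 0 < α) (hαβ : α < β) (hβ : β < Real.pi)
    (x y z : ℂ) (hx : x = Complex.exp (α * Complex.I))
    (hy : y = Complex.exp (β * Complex.I))
    (hδ : δ ∈ Set.Ioo 0 Real.pi)
    (hcos : Real.cos δ = Real.cos ((β + α) / 2) / Real.cos ((β - α) / 2))
    (hz : z = Complex.exp (δ * Complex.I))
    (a : ℂ)
    (ha : a = Complex.I * (y * (1 + (‖x‖ : ℂ) ^ 2)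
        - x * (1 + (‖y‖ : ℂ) ^ 2))
        / ((2 * (x.im * y.re - x.re * y.im) : ℝ) : ℂ)) :
    a = Complex.exp (((β + α) / 2 : ℝ) * Complex.I) / ((Real.cos ((β - α) / 2) : ℝ) : ℂ)
      ∧ a.re = z.re := by

  have hθ : α = (β + α) / 2 - (β - α) / 2 := by ring
  have hθ' : β = (β + α) / 2 + (β - α) / 2 := by ring
  set θ := (β + α) / 2 with hθdef
  set φ := (β - α) / 2 with hφdef
  have hφ0 : 0 < φ := by rw [hφdef]; linarith
  have hφπ : φ < Real.pi / 2 := by rw [hφdef]; linarith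
  have hsφ : 0 < Real.sin φ := Real.sin_pos_of_pos_of_lt_pi hφ0 (by linarith [Real.pi_pos])
  have hcφ : 0 < Real.cos φ := Real.cos_pos_of_mem_Ioo ⟨by linarith, hφπ⟩
  have habsx : ‖x‖ = 1 := by rw [hx]; simp [Complex.norm_exp]
  have habsy : ‖y‖ = 1 := by rw [hy]; simp [Complex.norm_exp]
  have hD : x.im * y.re - x.re * y.im = -(2 * Real.sin φ * Real.cos φ) := by
    rw [hx, hy]
    simp only [Complex.exp_ofReal_mul_I_re, Complex.exp_ofReal_mul_I_im]
    have h1 : Real.sin α * Real.cos β - Real.cos α * Real.sin β = Real.sin (α - β) :=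
      (Real.sin_sub α β).symm
    have h2 : α - β = -(2 * φ) := by rw [hφdef]; ring
    rw [h1, h2, Real.sin_neg, Real.sin_two_mul]
  have hD0 : (2 * (x.im * y.re - x.re * y.im)) ≠ 0 := by
    rw [hD]; nlinarith [mul_pos hsφ hcφ]
  have hcφ0 : (Real.cos φ : ℂ) ≠ 0 := by exact_mod_cast hcφ.ne'
  have hca : Real.cos α = Real.cos θ * Real.cos φ + Real.sin θ * Real.sin φ := by
    rw [hθ]; exact Real.cos_sub θ φ
  have hsa : Real.sin α = Real.sin θ * Real.cos φ - Real.cos θ * Real.sin φ := by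
    rw [hθ]; exact Real.sin_sub θ φ
  have hcb : Real.cos β = Real.cos θ * Real.cos φ - Real.sin θ * Real.sin φ := by
    rw [hθ']; exact Real.cos_add θ φ
  have hsb : Real.sin β = Real.sin θ * Real.cos φ + Real.cos θ * Real.sin φ := by
    rw [hθ']; exact Real.sin_add θ φ
  have hexp : ∀ t : ℝ, Complex.exp ((t : ℂ) * Complex.I)
      = (Real.cos t : ℂ) + (Real.sin t : ℂ) * Complex.I := by
    intro t
    rw [Complex.exp_mul_I, Complex.ofReal_cos, Complex.ofReal_sin]
  have key : a = Complex.exp ((θ : ℝ) * Complex.I) / ((Real.cos φ : ℝ) : ℂ) := by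
    rw [ha, habsx, habsy]
    rw [div_eq_div_iff (by exact_mod_cast hD0) hcφ0]
    rw [hD, hx, hy, hexp, hexp, hexp]
    rw [hca, hsa, hcb, hsb]
    push_cast
    ring_nf
    rw [Complex.I_sq]
    ring
  refine ⟨key, ?_⟩
  rw [key, hz]
  rw [Complex.div_ofReal_re]
  simp only [Complex.exp_ofReal_mul_I_re]
  rw [hcos]
end

section
/- Let 0 < α < β < π, let x = e^{iα}, y = e^{iβ}, let a = e^{i(β+α)/2}/cos((β−α)/2) and r_a = tan((β−α)/2) (so that the circle S¹(a,r_a) passes through x and y and is orthogonal to the unit circle). Let v be the intersection point of the line through x and 1 with the line through y and −1. Then v lies on the circle S¹(a,r_a), i.e., |v − a| = r_a. -/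
open Complex ComplexConjugate

/-- For `x = e^{iα}`, `y = e^{iβ}` with `0 < α < β < π`, the intersection point `v` of
the line through `x` and `1` with the line through `y` and `-1` lies on the circle with
center `a = e^{i(β+α)/2} / cos((β-α)/2)` and radius `r_a = tan((β-α)/2)`. -/
theorem v_on_orthogonal_circle (α β : ℝ)
    (hα : 0 < α) (hαβ : α < β) (hβ : β < Real.pi)
    (x y : ℂ) (hx : x = Complex.exp (α * Complex.I))
    (hy : y = Complex.exp (β * Complex.I))
    (a : ℂ) (ra : ℝ)
    (ha : a = Complex.exp (((β + α) / 2 : ℝ) * Complex.I) / ((Real.cos ((β - α) / 2) : ℝ) : ℂ))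
    (hra : ra = Real.tan ((β - α) / 2))
    (v : ℂ) (hv1 : v ∈ lineThrough x 1) (hv2 : v ∈ lineThrough y (-1)) :
    ‖v - a‖ = ra := by
  obtain ⟨t, ht⟩ := hv1
  obtain ⟨s, hs⟩ := hv2
  set sa := Real.sin (α/2) with hsa_def
  set ca := Real.cos (α/2) with hca_def
  set sb := Real.sin (β/2) with hsb_def
  set cb := Real.cos (β/2) with hcb_def
  have hπ := Real.pi_pos
  have hsa : 0 < sa := Real.sin_pos_of_pos_of_lt_pi (by linarith) (by linarith)
  have hca : 0 < ca := Real.cos_pos_of_mem_Ioo ⟨by linarith, by linarith⟩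
  have hsb : 0 < sb := Real.sin_pos_of_pos_of_lt_pi (by linarith) (by linarith)
  have hcb : 0 < cb := Real.cos_pos_of_mem_Ioo ⟨by linarith, by linarith⟩
  have hpyα : sa^2 + ca^2 = 1 := Real.sin_sq_add_cos_sq (α/2)
  have hpyβ : sb^2 + cb^2 = 1 := Real.sin_sq_add_cos_sq (β/2)
  -- half-angle expressions
  have hsinα : Real.sin α = 2 * sa * ca := by
    rw [hsa_def, hca_def, ← Real.sin_two_mul]; ring_nf
  have hcosα : Real.cos α = ca^2 - sa^2 := by
    have h := Real.cos_two_mul (α/2)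
    rw [show 2*(α/2) = α by ring] at h
    rw [h]; linarith [hpyα]
  have hsinβ : Real.sin β = 2 * sb * cb := by
    rw [hsb_def, hcb_def, ← Real.sin_two_mul]; ring_nf
  have hcosβ : Real.cos β = cb^2 - sb^2 := by
    have h := Real.cos_two_mul (β/2)
    rw [show 2*(β/2) = β by ring] at h
    rw [h]; linarith [hpyβ]
  have hcδ : Real.cos ((β - α)/2) = ca * cb + sa * sb := by
    rw [show (β - α)/2 = β/2 - α/2 by ring, Real.cos_sub]; ring
  have hsδ : Real.sin ((β - α)/2) = sb * ca - sa * cb := by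
    rw [show (β - α)/2 = β/2 - α/2 by ring, Real.sin_sub]; ring
  have hcγ : Real.cos ((β + α)/2) = ca * cb - sa * sb := by
    rw [show (β + α)/2 = α/2 + β/2 by ring, Real.cos_add]
  have hsγ : Real.sin ((β + α)/2) = sa * cb + ca * sb := by
    rw [show (β + α)/2 = α/2 + β/2 by ring, Real.sin_add]
  have hcδpos : 0 < ca * cb + sa * sb := by positivity
  -- components of v from the two line memberships
  have hre1 : v.re = Real.cos α + t * (1 - Real.cos α) := by
    rw [ht, hx]
    simp [Complex.add_re, Complex.smul_re, Complex.sub_re, Complex.exp_ofReal_mul_I_re]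
  have him1 : v.im = Real.sin α - t * Real.sin α := by
    rw [ht, hx]
    simp [Complex.add_im, Complex.smul_im, Complex.sub_im, Complex.exp_ofReal_mul_I_im]
    ring
  have hre2 : v.re = Real.cos β + s * (-1 - Real.cos β) := by
    rw [hs, hy]
    simp [Complex.add_re, Complex.smul_re, Complex.sub_re, Complex.exp_ofReal_mul_I_re]
  have him2 : v.im = Real.sin β - s * Real.sin β := by
    rw [hs, hy]
    simp [Complex.add_im, Complex.smul_im, Complex.sub_im, Complex.exp_ofReal_mul_I_im]
    ring
  have e1 : v.re * Real.sin α + v.im * (1 - Real.cos α) = Real.sin α := by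
    rw [hre1, him1]; ring
  have e2 : v.re * Real.sin β - v.im * (1 + Real.cos β) = -Real.sin β := by
    rw [hre2, him2]; ring
  rw [hsinα, hcosα] at e1
  rw [hsinβ, hcosβ] at e2
  -- divide common factors
  have e1' : v.re * ca + v.im * sa = ca := by
    have h2sa : (2 : ℝ) * sa ≠ 0 := by positivity
    apply mul_left_cancel₀ h2sa
    linear_combination e1 + v.im * hpyα
  have e2' : v.re * sb - v.im * cb = -sb := by
    have h2cb : (2 : ℝ) * cb ≠ 0 := by positivity
    apply mul_left_cancel₀ h2cb
    linear_combination e2 - v.im * hpyβ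
  have hvre : v.re = (ca * cb - sa * sb) / (ca * cb + sa * sb) := by
    rw [eq_div_iff (ne_of_gt hcδpos)]
    linear_combination cb * e1' + sa * e2'
  have hvim : v.im = 2 * ca * sb / (ca * cb + sa * sb) := by
    rw [eq_div_iff (ne_of_gt hcδpos)]
    linear_combination sb * e1' - ca * e2'
  -- components of a
  have hare : a.re = (ca * cb - sa * sb) / (ca * cb + sa * sb) := by
    rw [ha, Complex.div_ofReal_re, Complex.exp_ofReal_mul_I_re, hcγ, hcδ]
  have haim : a.im = (sa * cb + ca * sb) / (ca * cb + sa * sb) := by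
    rw [ha, Complex.div_ofReal_im, Complex.exp_ofReal_mul_I_im, hsγ, hcδ]
  have hra' : ra = (sb * ca - sa * cb) / (ca * cb + sa * sb) := by
    rw [hra, Real.tan_eq_sin_div_cos, hsδ, hcδ]
  have hkey : v - a = (ra : ℝ) * Complex.I := by
    apply Complex.ext
    · simp only [Complex.sub_re, hvre, hare, Complex.mul_re, Complex.ofReal_re,
        Complex.ofReal_im, Complex.I_re, Complex.I_im]
      ring
    · simp only [Complex.sub_im, hvim, haim, hra', Complex.mul_im, Complex.ofReal_re,
        Complex.ofReal_im, Complex.I_re, Complex.I_im]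
      ring
  rw [hkey]
  simp only [norm_mul, Complex.norm_I, Complex.norm_real, Real.norm_eq_abs, mul_one]
  rw [_root_.abs_of_nonneg]
  rw [hra']
  have hsδpos : 0 ≤ sb * ca - sa * cb := by
    have h := Real.sin_nonneg_of_nonneg_of_le_pi (x := (β - α)/2) (by linarith) (by linarith)
    rw [hsδ] at h; linarith
  positivity
end

section
/- Let 0 < α < β < π with α + β ≠ π, let x = e^{iα}, y = e^{iβ}, let a = e^{i(β+α)/2}/cos((β−α)/2), r_a = tan((β−α)/2), and let w be the real number cos((β−α)/2)/cos((β+α)/2) (the intersection of the line through x and y with the real axis). Then the circle S¹(a,r_a) is orthogonal to the circle S¹(w/2,|w|/2); equivalently r_a² + (|w|/2)² = |a − w/2|², equivalently a·w = 1 where a·w denotes the real inner product (Re a)(Re w) + (Im a)(Im w). -/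
open Complex ComplexConjugate

/-- For `x = e^{iα}`, `y = e^{iβ}` with `α + β ≠ π`, the circle `S¹(a, r_a)` with
`a = e^{i(β+α)/2} / cos((β-α)/2)`, `r_a = tan((β-α)/2)` is orthogonal to the circle
`S¹(w/2, |w|/2)` where `w = cos((β-α)/2) / cos((β+α)/2)`; equivalently
`r_a² + (|w|/2)² = |a - w/2|²`, equivalently `a · w = 1` (real inner product). -/
theorem orthogonal_circles_a_w (α β : ℝ)
    (hα : 0 < α) (hαβ : α < β) (hβ : β < Real.pi) (hne : α + β ≠ Real.pi)
    (x y : ℂ) (hx : x = Complex.exp (α * Complex.I))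
    (hy : y = Complex.exp (β * Complex.I))
    (a : ℂ) (ra : ℝ)
    (ha : a = Complex.exp (((β + α) / 2 : ℝ) * Complex.I) / ((Real.cos ((β - α) / 2) : ℝ) : ℂ))
    (hra : ra = Real.tan ((β - α) / 2))
    (w : ℝ) (hw : w = Real.cos ((β - α) / 2) / Real.cos ((β + α) / 2)) :
    ra ^ 2 + (|w| / 2) ^ 2 = ‖a - (w : ℂ) / 2‖ ^ 2 ∧ dotR a (w : ℂ) = 1 := by
  have hpi := Real.pi_pos
  set c1 := Real.cos ((β - α) / 2) with hc1def
  set c2 := Real.cos ((β + α) / 2) with hc2def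
  have hc1 : 0 < c1 := by
    apply Real.cos_pos_of_mem_Ioo
    constructor <;> [nlinarith; nlinarith]
  have hc2 : c2 ≠ 0 := by
    intro h
    have h1 : (β + α) / 2 ∈ Set.Icc 0 Real.pi := by constructor <;> nlinarith
    have h2 : Real.pi / 2 ∈ Set.Icc 0 Real.pi := by constructor <;> nlinarith
    have := Real.injOn_cos h1 h2 (by rw [← hc2def, h, Real.cos_pi_div_two])
    apply hne; linarith
  have hare : a.re = c2 / c1 := by
    rw [ha, Complex.div_ofReal_re, Complex.exp_ofReal_mul_I_re]
  have haim : a.im = Real.sin ((β + α) / 2) / c1 := by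
    rw [ha, Complex.div_ofReal_im, Complex.exp_ofReal_mul_I_im]
  have hdot : dotR a (w : ℂ) = 1 := by
    rw [dotR, Complex.ofReal_re, Complex.ofReal_im, hare, hw]
    field_simp
    ring
  refine ⟨?_, hdot⟩
  have hra2 : ra ^ 2 = 1 / c1 ^ 2 - 1 := by
    rw [hra, Real.tan_eq_sin_div_cos, ← hc1def]
    have hs : Real.sin ((β - α) / 2) ^ 2 = 1 - c1 ^ 2 := by
      have := Real.sin_sq_add_cos_sq ((β - α) / 2); rw [← hc1def] at this; linarith
    field_simp [div_pow, hs]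
    exact hs
  rw [Complex.sq_norm (a - (w:ℂ)/2), Complex.normSq_apply, Complex.sub_re, Complex.sub_im,
    show ((w:ℂ)/2) = ((w/2:ℝ):ℂ) by push_cast; ring]
  simp only [Complex.ofReal_re, Complex.ofReal_im, hare, haim]
  have hs2 : (Real.sin ((β + α) / 2)) ^ 2 = 1 - c2 ^ 2 := by
    have := Real.sin_sq_add_cos_sq ((β + α) / 2); rw [← hc2def] at this; linarith
  have habs : (|w|/2) ^ 2 = (w/2) ^ 2 := by rw [div_pow, div_pow, _root_.sq_abs]
  rw [hra2, habs, hw]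
  field_simp
  linear_combination ((c1 * (c2 * 2)) ^ 2 * c1 ^ 2 - (4 * c1 ^ 4 * c2 ^ 2 + 16 * c1 ^ 4 * c2 ^ 4) + (16 * c1 ^ 4 * c2 ^ 4 - 4 * c2 ^ 2)) * hs2
end

section
/- Let 0 < α < β < π with α + β ≠ π, let x = e^{iα}, y = e^{iβ}, let a = e^{i(β+α)/2}/cos((β−α)/2), r_a = tan((β−α)/2), and let w = cos((β−α)/2)/cos((β+α)/2) ∈ ℝ. Let s and t be the two intersection points of the circles S¹(a,r_a) and S¹(w/2,|w|/2), and let u be the intersection of the vertical line {ζ : Re ζ = Re a} with the line through x and y. Then u, s, t are collinear; in fact every point m ∈ {s,t,u} satisfies m·(2a − w) = 1, where · denotes the real inner product on ℂ ≅ ℝ². -/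
open Complex ComplexConjugate

/-- If `z` is orthogonal to `v ≠ 0` (real inner product), then `z` is a real multiple
of `I * v`. -/
lemma perp_aux (v z : ℂ) (hv : v ≠ 0) (h : z.re * v.re + z.im * v.im = 0) :
    ∃ r : ℝ, z = r • (Complex.I * v) := by
  refine ⟨(z.im * v.re - z.re * v.im) / (v.re ^ 2 + v.im ^ 2), ?_⟩
  have hv2 : v.re ^ 2 + v.im ^ 2 ≠ 0 := by
    have := Complex.normSq_pos.mpr hv
    rw [Complex.normSq_apply] at this
    nlinarith
  apply Complex.ext <;>
    simp only [Complex.smul_re, Complex.smul_im, Complex.mul_re, Complex.mul_im,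
      Complex.I_re, Complex.I_im, smul_eq_mul] <;>
    field_simp <;>
    first
      | linear_combination v.re * h
      | linear_combination v.im * h

/-- Let `s, t` be the intersection points of the circles `S¹(a, r_a)` and
`S¹(w/2, |w|/2)`, and let `u` be the intersection of the vertical line `Re ζ = Re a`
with the line through `x` and `y`. Then `u, s, t` are collinear; in fact each
`m ∈ {s, t, u}` satisfies `m · (2a - w) = 1` (real inner product). -/
theorem u_s_t_collinear (α β : ℝ)
    (hα : 0 < α) (hαβ : α < β) (hβ : β < Real.pi) (hne : α + β ≠ Real.pi)
    (x y : ℂ) (hx : x = Complex.exp (α * Complex.I))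
    (hy : y = Complex.exp (β * Complex.I))
    (a : ℂ) (ra : ℝ)
    (ha : a = Complex.exp (((β + α) / 2 : ℝ) * Complex.I) / ((Real.cos ((β - α) / 2) : ℝ) : ℂ))
    (hra : ra = Real.tan ((β - α) / 2))
    (w : ℝ) (hw : w = Real.cos ((β - α) / 2) / Real.cos ((β + α) / 2))
    (s t : ℂ) (hst : s ≠ t)
    (hs1 : ‖s - a‖ = ra) (hs2 : ‖s - (w : ℂ) / 2‖ = |w| / 2)
    (ht1 : ‖t - a‖ = ra) (ht2 : ‖t - (w : ℂ) / 2‖ = |w| / 2)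
    (u : ℂ) (hu1 : u.re = a.re) (hu2 : u ∈ lineThrough x y) :
    Collinear ℝ ({u, s, t} : Set ℂ) ∧
    ∀ m ∈ ({s, t, u} : Set ℂ), dotR m (2 * a - (w : ℂ)) = 1 := by
  have hpi := Real.pi_pos
  set δ := (β - α) / 2 with hδdef
  set γ := (β + α) / 2 with hγdef
  clear_value δ γ
  have hδ0 : 0 < δ := by rw [hδdef]; linarith
  have hδπ : δ < Real.pi / 2 := by rw [hδdef]; linarith
  have hγ0 : 0 < γ := by rw [hγdef]; linarith
  have hγπ : γ < Real.pi := by rw [hγdef]; linarith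
  have hcδ : 0 < Real.cos δ := Real.cos_pos_of_mem_Ioo ⟨by linarith, hδπ⟩
  have hsγ : 0 < Real.sin γ := Real.sin_pos_of_pos_of_lt_pi hγ0 hγπ
  have hsδ : 0 < Real.sin δ := Real.sin_pos_of_pos_of_lt_pi hδ0 (by linarith)
  have hcγ : Real.cos γ ≠ 0 := by
    intro h0
    rcases Real.cos_eq_zero_iff.mp h0 with ⟨n, hn⟩
    have h1 : (0:ℝ) < 2 * n + 1 := by nlinarith
    have h2 : (2:ℝ) * n + 1 < 2 := by nlinarith
    have h1' : (0:ℤ) < 2 * n + 1 := by exact_mod_cast h1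
    have h2' : (2:ℤ) * n + 1 < 2 := by exact_mod_cast h2
    have hn0 : n = 0 := by omega
    subst hn0
    apply hne
    rw [hγdef] at hn
    push_cast at hn
    linarith
  have hcδ' : Real.cos δ ≠ 0 := ne_of_gt hcδ
  have hsγ' : Real.sin γ ≠ 0 := ne_of_gt hsγ
  have hsδ' : Real.sin δ ≠ 0 := ne_of_gt hsδ
  have are : a.re = Real.cos γ / Real.cos δ := by
    rw [ha, Complex.div_ofReal_re, Complex.exp_ofReal_mul_I_re]
  have aim : a.im = Real.sin γ / Real.cos δ := by
    rw [ha, Complex.div_ofReal_im, Complex.exp_ofReal_mul_I_im]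
  have hra' : ra = Real.sin δ / Real.cos δ := by rw [hra, Real.tan_eq_sin_div_cos]
  have hw' : w = Real.cos δ / Real.cos γ := hw
  have pγ : Real.sin γ ^ 2 + Real.cos γ ^ 2 = 1 := Real.sin_sq_add_cos_sq γ
  have pδ : Real.sin δ ^ 2 + Real.cos δ ^ 2 = 1 := Real.sin_sq_add_cos_sq δ
  -- components of 2a - w
  have vre : (2 * a - (w : ℂ)).re = 2 * (Real.cos γ / Real.cos δ) - w := by
    rw [Complex.sub_re, Complex.mul_re, Complex.ofReal_re, are]
    norm_num
  have vim : (2 * a - (w : ℂ)).im = 2 * (Real.sin γ / Real.cos δ) := by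
    rw [Complex.sub_im, Complex.mul_im, Complex.ofReal_im, aim]
    norm_num
  -- key fact for circle intersection points
  have key : ∀ m : ℂ, ‖m - a‖ = ra → ‖m - (w : ℂ) / 2‖ = |w| / 2 →
      dotR m (2 * a - (w : ℂ)) = 1 := by
    intro m h1 h2
    have e1 : Complex.normSq (m - a) = ra ^ 2 := by rw [← Complex.sq_norm, h1]
    have e2 : Complex.normSq (m - ((w / 2 : ℝ) : ℂ)) = (|w| / 2) ^ 2 := by
      rw [← Complex.sq_norm, show ((w / 2 : ℝ) : ℂ) = (w : ℂ) / 2 by push_cast; ring, h2]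
    rw [Complex.normSq_apply, Complex.sub_re, Complex.sub_im, are, aim, hra'] at e1
    rw [Complex.normSq_apply, Complex.sub_re, Complex.sub_im, Complex.ofReal_re,
      Complex.ofReal_im] at e2
    have e2' : m.re ^ 2 + m.im ^ 2 = w * m.re := by
      have habs : (|w| / 2) ^ 2 = w ^ 2 / 4 := by rw [div_pow, _root_.sq_abs]; norm_num
      rw [habs] at e2
      linear_combination e2
    rw [hw'] at e2'
    rw [dotR, vre, vim, hw']
    have hC := hcγ
    have hc := hcδ'
    field_simp at e1 e2' ⊢
    have e1d : (m.re * Real.cos δ - Real.cos γ) * (m.re * Real.cos δ - Real.cos γ) +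
        (m.im * Real.cos δ - Real.sin γ) * (m.im * Real.cos δ - Real.sin γ) =
        Real.sin δ ^ 2 := by
      apply mul_right_cancel₀ (pow_ne_zero 2 hc)
      linear_combination Real.cos δ ^ 2 * e1
    apply mul_left_cancel₀ hc
    linear_combination Real.cos δ ^ 2 * e2' - Real.cos γ * e1d + Real.cos γ * pγ -
      Real.cos γ * pδ
  have hs := key s hs1 hs2
  have ht := key t ht1 ht2
  -- the point u
  have xre : x.re = Real.cos α := by rw [hx]; exact Complex.exp_ofReal_mul_I_re α
  have xim : x.im = Real.sin α := by rw [hx]; exact Complex.exp_ofReal_mul_I_im α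
  have yre : y.re = Real.cos β := by rw [hy]; exact Complex.exp_ofReal_mul_I_re β
  have yim : y.im = Real.sin β := by rw [hy]; exact Complex.exp_ofReal_mul_I_im β
  have hca : Real.cos α = Real.cos γ * Real.cos δ + Real.sin γ * Real.sin δ := by
    have h : α = γ - δ := by rw [hγdef, hδdef]; ring
    rw [h, Real.cos_sub]
  have hsa : Real.sin α = Real.sin γ * Real.cos δ - Real.cos γ * Real.sin δ := by
    have h : α = γ - δ := by rw [hγdef, hδdef]; ring
    rw [h, Real.sin_sub]
  have hcb : Real.cos β = Real.cos γ * Real.cos δ - Real.sin γ * Real.sin δ := by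
    have h : β = γ + δ := by rw [hγdef, hδdef]; ring
    rw [h, Real.cos_add]
  have hsb : Real.sin β = Real.sin γ * Real.cos δ + Real.cos γ * Real.sin δ := by
    have h : β = γ + δ := by rw [hγdef, hδdef]; ring
    rw [h, Real.sin_add]
  obtain ⟨r, hur⟩ := hu2
  have ure : u.re = Real.cos α + r * (Real.cos β - Real.cos α) := by
    rw [hur]; simp [Complex.add_re, Complex.smul_re, Complex.sub_re, xre, yre]
  have uim : u.im = Real.sin α + r * (Real.sin β - Real.sin α) := by
    rw [hur]; simp [Complex.add_im, Complex.smul_im, Complex.sub_im, xim, yim]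
  have hreq : Real.cos α + r * (Real.cos β - Real.cos α) = Real.cos γ / Real.cos δ := by
    rw [← ure, hu1, are]
  have hreq2 : (Real.cos α + r * (Real.cos β - Real.cos α)) * Real.cos δ = Real.cos γ := by
    rw [hreq]; field_simp
  have uimval : u.im * (2 * Real.sin γ * Real.sin δ) * Real.cos δ =
      (Real.sin γ * Real.cos δ - Real.cos γ * Real.sin δ) *
        (2 * Real.sin γ * Real.sin δ) * Real.cos δ +
      ((Real.cos γ * Real.cos δ + Real.sin γ * Real.sin δ) * Real.cos δ - Real.cos γ) *
        (2 * Real.cos γ * Real.sin δ) := by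
    rw [uim, hsa, hsb]
    rw [hca, hcb] at hreq2
    linear_combination (-2 * Real.cos γ * Real.sin δ) * hreq2
  have h2d : (2 : ℝ) * Real.sin δ ≠ 0 := by positivity
  have uimv : u.im * (Real.sin γ * Real.cos δ) =
      (Real.sin γ * Real.cos δ - Real.cos γ * Real.sin δ) *
      (Real.sin γ * Real.cos δ + Real.cos γ * Real.sin δ) := by
    apply mul_right_cancel₀ h2d
    linear_combination uimval + 2 * Real.cos γ ^ 2 * Real.sin δ * pδ
  have ureCc : u.re = Real.cos γ / Real.cos δ := by rw [hu1, are]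
  have hu : dotR u (2 * a - (w : ℂ)) = 1 := by
    rw [dotR, vre, vim, hw', ureCc]
    field_simp
    ring_nf
    linear_combination 2 * uimv +
      2 * Real.cos δ ^ 2 * pγ - 2 * Real.cos γ ^ 2 * pδ
  constructor
  · rw [collinear_iff_of_mem (Set.mem_insert u {s, t})]
    refine ⟨Complex.I * (2 * a - (w : ℂ)), ?_⟩
    have hvne : (2 * a - (w : ℂ)) ≠ 0 := by
      intro h0
      have h1 : (2 * a - (w : ℂ)).im = 0 := by rw [h0]; simp
      rw [vim] at h1
      have h2 : 0 < Real.sin γ / Real.cos δ := div_pos hsγ hcδ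
      linarith
    intro p hp
    simp only [Set.mem_insert_iff, Set.mem_singleton_iff] at hp
    have hpd : dotR p (2 * a - (w : ℂ)) = 1 := by
      rcases hp with rfl | rfl | rfl
      · exact hu
      · exact hs
      · exact ht
    have hperp : (p - u).re * (2 * a - (w : ℂ)).re + (p - u).im * (2 * a - (w : ℂ)).im = 0 := by
      rw [Complex.sub_re, Complex.sub_im]
      have h3 := hu
      rw [dotR] at h3 hpd
      ring_nf
      ring_nf at h3 hpd
      linarith
    obtain ⟨rr, hrr⟩ := perp_aux _ _ hvne hperp
    refine ⟨rr, ?_⟩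
    rw [vadd_eq_add, ← hrr]
    ring
  · intro m hm
    simp only [Set.mem_insert_iff, Set.mem_singleton_iff] at hm
    rcases hm with rfl | rfl | rfl
    · exact hs
    · exact ht
    · exact hu
end

section
/- Let 0 < α < β < π, let x = e^{iα}, y = e^{iβ}, let a = e^{i(β+α)/2}/cos((β−α)/2), r_a = tan((β−α)/2), and let v be the intersection of the line through x and 1 with the line through y and −1. Then the orthocenter p of the triangle with vertices v, 1, −1, namely p = Re v + i(1 − (Re v)²)/Im v, lies on the circle S¹(a,r_a), i.e., |p − a| = r_a. -/
open Complex ComplexConjugate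

/-- The orthocenter `p = Re v + i (1 - (Re v)²) / Im v` of the triangle with vertices
`v, 1, -1`, where `v` is the intersection of the line through `x = e^{iα}` and `1` with
the line through `y = e^{iβ}` and `-1`, lies on the circle `S¹(a, r_a)` with
`a = e^{i(β+α)/2} / cos((β-α)/2)` and `r_a = tan((β-α)/2)`. -/
theorem orthocenter_on_orthogonal_circle (α β : ℝ)
    (hα : 0 < α) (hαβ : α < β) (hβ : β < Real.pi)
    (x y : ℂ) (hx : x = Complex.exp (α * Complex.I))
    (hy : y = Complex.exp (β * Complex.I))
    (a : ℂ) (ra : ℝ)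
    (ha : a = Complex.exp (((β + α) / 2 : ℝ) * Complex.I) / ((Real.cos ((β - α) / 2) : ℝ) : ℂ))
    (hra : ra = Real.tan ((β - α) / 2))
    (v : ℂ) (hv1 : v ∈ lineThrough x 1) (hv2 : v ∈ lineThrough y (-1))
    (hvim : v.im ≠ 0)
    (p : ℂ) (hp : p = (v.re : ℂ) + (((1 - v.re ^ 2) / v.im : ℝ) : ℂ) * Complex.I) :
    ‖p - a‖ = ra := by
  have hπ := Real.pi_pos
  obtain ⟨t, htv⟩ := hv1
  obtain ⟨s, hsv⟩ := hv2
  set c1 := Real.cos (α/2) with hc1def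
  set s1 := Real.sin (α/2) with hs1def
  set c2 := Real.cos (β/2) with hc2def
  set s2 := Real.sin (β/2) with hs2def
  have hc1 : 0 < c1 := Real.cos_pos_of_mem_Ioo ⟨by linarith, by linarith⟩
  have hc2 : 0 < c2 := Real.cos_pos_of_mem_Ioo ⟨by linarith, by linarith⟩
  have hs1 : 0 < s1 := Real.sin_pos_of_pos_of_lt_pi (by linarith) (by linarith)
  have hs2 : 0 < s2 := Real.sin_pos_of_pos_of_lt_pi (by linarith) (by linarith)
  have hsd : 0 < s2 * c1 - c2 * s1 := by
    have h := Real.sin_pos_of_pos_of_lt_pi (x := β/2 - α/2) (by linarith) (by linarith)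
    rwa [Real.sin_sub] at h
  have hD : 0 < c2 * c1 + s2 * s1 := by
    have h := Real.cos_pos_of_mem_Ioo (x := β/2 - α/2) ⟨by linarith, by linarith⟩
    rwa [Real.cos_sub] at h
  set D := c2 * c1 + s2 * s1 with hDdef
  -- double angle facts
  have hsinα : Real.sin α = 2 * s1 * c1 := by
    have h := Real.sin_two_mul (α/2); rw [show 2*(α/2) = α by ring] at h; exact h
  have hcosα : Real.cos α = 1 - 2 * s1^2 := by
    have h := Real.cos_two_mul (α/2); rw [show 2*(α/2) = α by ring] at h
    have hp2 := Real.sin_sq_add_cos_sq (α/2)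
    rw [← hs1def, ← hc1def] at hp2
    linarith
  have hsinβ : Real.sin β = 2 * s2 * c2 := by
    have h := Real.sin_two_mul (β/2); rw [show 2*(β/2) = β by ring] at h; exact h
  have hcosβ : Real.cos β = 2 * c2^2 - 1 := by
    have h := Real.cos_two_mul (β/2); rw [show 2*(β/2) = β by ring] at h; exact h
  -- components of v from the two line memberships
  have hvre1 : v.re = Real.cos α + t * (1 - Real.cos α) := by
    rw [htv, hx]
    simp [Complex.add_re, Complex.smul_re, Complex.sub_re,
      Complex.exp_ofReal_mul_I_re]
  have hvim1 : v.im = Real.sin α - t * Real.sin α := by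
    rw [htv, hx]
    simp [Complex.add_im, Complex.smul_im, Complex.sub_im,
      Complex.exp_ofReal_mul_I_im]
    ring
  have hvre2 : v.re = Real.cos β + s * (-1 - Real.cos β) := by
    rw [hsv, hy]
    simp [Complex.add_re, Complex.smul_re, Complex.sub_re,
      Complex.exp_ofReal_mul_I_re]
  have hvim2 : v.im = Real.sin β - s * Real.sin β := by
    rw [hsv, hy]
    simp [Complex.add_im, Complex.smul_im, Complex.sub_im,
      Complex.exp_ofReal_mul_I_im]
    ring
  -- the two line conditions in half-angle form
  have F1 : (1 - v.re) * c1 = v.im * s1 := by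
    have h2 : (1 - v.re) * (2*s1*c1) * c1 = v.im * s1 * (2*s1*c1) := by
      rw [hvre1, hvim1, hsinα, hcosα]; ring
    have hne : (2*s1*c1) ≠ 0 := by positivity
    field_simp at h2
    apply mul_left_cancel₀ (a := 2*s1) (by positivity)
    nlinarith [h2]
  have F2 : (v.re + 1) * s2 = v.im * c2 := by
    have h2 : (v.re + 1) * s2 * (2*c2) = v.im * c2 * (2*c2) := by
      rw [hvre2, hvim2, hsinβ, hcosβ]; ring
    exact mul_right_cancel₀ (b := 2*c2) (by positivity) h2
  -- solve for v.re and v.im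
  have hu : v.re * D = c2*c1 - s2*s1 := by
    rw [hDdef]; linear_combination (-c2) * F1 + s1 * F2
  have hw : v.im * D = 2 * s2 * c1 := by
    rw [hDdef]; linear_combination (-s2) * F1 + (-c1) * F2
  -- components of a
  have haRe : a.re = (c2*c1 - s2*s1) / D := by
    rw [ha, Complex.div_ofReal_re, Complex.exp_ofReal_mul_I_re,
      show (β+α)/2 = β/2 + α/2 by ring, show (β-α)/2 = β/2 - α/2 by ring,
      Real.cos_add, Real.cos_sub]
  have haIm : a.im = (s2*c1 + c2*s1) / D := by
    rw [ha, Complex.div_ofReal_im, Complex.exp_ofReal_mul_I_im,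
      show (β+α)/2 = β/2 + α/2 by ring, show (β-α)/2 = β/2 - α/2 by ring,
      Real.sin_add, Real.cos_sub]
  -- the key identity : p - a is purely imaginary
  have hkey : p - a = ((-((s2*c1 - c2*s1)/D) : ℝ) : ℂ) * Complex.I := by
    apply Complex.ext
    · simp only [Complex.sub_re, hp, Complex.add_re, Complex.ofReal_re,
        Complex.mul_re, Complex.ofReal_im, Complex.I_re, Complex.I_im,
        mul_zero, mul_one, zero_mul, sub_zero, zero_sub, haRe]
      have huv : v.re = (c2*c1 - s2*s1)/D := by
        rw [eq_div_iff hD.ne']; exact hu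
      rw [huv]; ring
    · simp only [Complex.sub_im, hp, Complex.add_im, Complex.ofReal_im,
        Complex.mul_im, Complex.ofReal_re, Complex.I_re, Complex.I_im,
        mul_zero, mul_one, zero_mul, add_zero, zero_add, haIm]
      have h1u : (1 - v.re^2)/v.im = 2*c2*s1/D := by
        rw [div_eq_div_iff hvim hD.ne']
        apply mul_right_cancel₀ hD.ne'
        linear_combination (-(v.re*D) - (c2*c1 - s2*s1)) * hu + (-(2*c2*s1)) * hw
      rw [h1u]
      field_simp
      ring
  rw [hkey, norm_mul, Complex.norm_real, Real.norm_eq_abs, Complex.norm_I, mul_one, abs_neg,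
    _root_.abs_of_nonneg (div_nonneg hsd.le hD.le), hra,
    show (β-α)/2 = β/2 - α/2 by ring, Real.tan_eq_sin_div_cos,
    Real.sin_sub, Real.cos_sub]
end

section
/- Let x and y be points of the unit circle with Im x > 0 and Im y > 0. Then 2·ρ_{H²}(x,y) = ρ_{B²}(Re x, Re y), where Re x, Re y ∈ (−1,1) are the orthogonal projections of x and y onto the real axis, regarded as points of the unit disk. -/
open Complex ComplexConjugate

private lemma key (a b u v : ℝ) (hu : 0 < u) (hv : 0 < v)
    (hx : a ^ 2 + u ^ 2 = 1) (hy : b ^ 2 + v ^ 2 = 1) :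
    2 * arcosh (1 + ((a - b) ^ 2 + (u - v) ^ 2) / (2 * u * v)) =
      2 * Real.arsinh (|a - b| / (u * v)) := by
  have huv : 0 < u * v := mul_pos hu hv
  set c : ℝ := (1 - a * b) / (u * v) with hc
  set s : ℝ := |a - b| / (u * v) with hs
  have hc1 : 1 + ((a - b) ^ 2 + (u - v) ^ 2) / (2 * u * v) = c := by
    rw [hc]; field_simp; nlinarith
  have hs0 : 0 ≤ s := div_nonneg (abs_nonneg _) huv.le
  have hcs : c ^ 2 - 1 = s ^ 2 := by
    rw [hc, hs, div_pow, div_pow, _root_.sq_abs,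
      div_sub' (by positivity), div_eq_div_iff (by positivity) (by positivity)]
    linear_combination ((u * v) ^ 2 * (a ^ 2 - 1)) * hy - ((u * v) ^ 2 * v ^ 2) * hx
  have hcpos : 0 < c := by
    apply div_pos _ huv
    nlinarith [sq_nonneg (a - b), mul_pos hu hu, mul_pos hv hv]
  unfold arcosh Real.arsinh
  rw [hc1, hcs, Real.sqrt_sq hs0, show (1 : ℝ) + s ^ 2 = c ^ 2 by linarith,
    Real.sqrt_sq hcpos.le, add_comm s c]

/-- Projection property: for `x, y` on the unit circle with positive imaginary parts,
`2 ρ_{H²}(x, y) = ρ_{B²}(Re x, Re y)`. -/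
theorem projection_property (x y : ℂ)
    (hx1 : ‖x‖ = 1) (hx2 : 0 < x.im)
    (hy1 : ‖y‖ = 1) (hy2 : 0 < y.im) :
    2 * rhoH x y = rhoB ((x.re : ℝ) : ℂ) ((y.re : ℝ) : ℂ) := by
  have hx : x.re ^ 2 + x.im ^ 2 = 1 := by
    have := Complex.sq_norm x
    rw [hx1, Complex.normSq_apply] at this
    nlinarith
  have hy : y.re ^ 2 + y.im ^ 2 = 1 := by
    have := Complex.sq_norm y
    rw [hy1, Complex.normSq_apply] at this
    nlinarith
  have habs : ‖x - y‖ ^ 2 = (x.re - y.re) ^ 2 + (x.im - y.im) ^ 2 := by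
    rw [Complex.sq_norm, Complex.normSq_apply]
    simp [Complex.sub_re, Complex.sub_im]
    ring
  have hsu : Real.sqrt (1 - ‖((x.re : ℝ) : ℂ)‖ ^ 2) = x.im := by
    rw [Complex.norm_real, Real.norm_eq_abs, _root_.sq_abs, show (1 : ℝ) - x.re ^ 2 = x.im ^ 2 by linarith]
    exact Real.sqrt_sq hx2.le
  have hsv : Real.sqrt (1 - ‖((y.re : ℝ) : ℂ)‖ ^ 2) = y.im := by
    rw [Complex.norm_real, Real.norm_eq_abs, _root_.sq_abs, show (1 : ℝ) - y.re ^ 2 = y.im ^ 2 by linarith]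
    exact Real.sqrt_sq hy2.le
  have hab : ‖(x.re : ℂ) - (y.re : ℂ)‖ = |x.re - y.re| := by
    rw [← Complex.ofReal_sub, Complex.norm_real, Real.norm_eq_abs]
  rw [rhoH, rhoB, habs, hsu, hsv, hab]
  exact key x.re y.re x.im y.im hx2 hy2 hx hy
end

section
/- Let t ∈ (0,1). The Euclidean line through the points i and t meets the unit circle in a second point N = (2t + i(t²−1))/(1+t²), and the foot of the perpendicular from N to the real axis is the point 2t/(1+t²) ∈ (0,1), which satisfies ρ_{B²}(0, 2t/(1+t²)) = 2·ρ_{B²}(0, t). Consequently, iterating this construction from X₁ = t produces points X_k on the same radius with ρ_{B²}(0, X_k) = k·ρ_{B²}(0, X₁). -/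
open Complex ComplexConjugate

lemma rhoB_zero_real (x : ℝ) (h0 : 0 ≤ x) (h1 : x < 1) :
    rhoB 0 (x : ℂ) = Real.log ((1 + x) / (1 - x)) := by
  have hx1 : 0 < 1 - x ^ 2 := by nlinarith
  have hs : 0 < Real.sqrt (1 - x ^ 2) := Real.sqrt_pos.2 hx1
  have habs : ‖(x : ℂ)‖ = x := by
    rw [Complex.norm_real, Real.norm_of_nonneg h0]
  have h2 : rhoB 0 (x : ℂ) = 2 * Real.arsinh (x / Real.sqrt (1 - x ^ 2)) := by
    simp [rhoB, habs, _root_.abs_of_nonneg h0]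
  rw [h2, Real.arsinh]
  have hsq : Real.sqrt (1 + (x / Real.sqrt (1 - x ^ 2)) ^ 2) = 1 / Real.sqrt (1 - x ^ 2) := by
    rw [div_pow, Real.sq_sqrt hx1.le,
      show 1 + x ^ 2 / (1 - x ^ 2) = (1 - x ^ 2)⁻¹ by field_simp; ring,
      Real.sqrt_inv, one_div]
  rw [hsq,
    show x / Real.sqrt (1 - x ^ 2) + 1 / Real.sqrt (1 - x ^ 2)
      = (x + 1) / Real.sqrt (1 - x ^ 2) by ring]
  have h3 : (1 + x) / (1 - x) = ((x + 1) / Real.sqrt (1 - x ^ 2)) ^ 2 := by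
    rw [div_pow, Real.sq_sqrt hx1.le]
    rw [div_eq_div_iff (by nlinarith) hx1.ne']
    ring
  rw [h3, Real.log_pow]
  norm_num

/-- For `t ∈ (0,1)`, the line through `i` and `t` meets the unit circle in the second
point `N = (2t + i(t²-1))/(1+t²)`; the foot of the perpendicular from `N` to the real
axis is `2t/(1+t²) ∈ (0,1)` and satisfies `ρ_{B²}(0, 2t/(1+t²)) = 2 ρ_{B²}(0, t)`.
Consequently, iterating the construction from `X₁ = t` produces points `X_k` on the same
radius with `ρ_{B²}(0, X_k) = k · ρ_{B²}(0, X₁)`. -/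
theorem distance_doubling_construction (t : ℝ) (ht0 : 0 < t) (ht1 : t < 1)
    (N : ℂ)
    (hN : N = (2 * (t : ℂ) + ((t : ℂ) ^ 2 - 1) * Complex.I) / (1 + (t : ℂ) ^ 2)) :
    N ∈ lineThrough Complex.I (t : ℂ) ∧ ‖N‖ = 1 ∧ N ≠ Complex.I ∧
    N.re = 2 * t / (1 + t ^ 2) ∧
    (0 < 2 * t / (1 + t ^ 2) ∧ 2 * t / (1 + t ^ 2) < 1) ∧
    rhoB 0 ((2 * t / (1 + t ^ 2) : ℝ) : ℂ) = 2 * rhoB 0 ((t : ℝ) : ℂ) ∧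
    (∃ X : ℕ → ℝ, X 1 = t ∧ (∀ k, 0 ≤ X k ∧ X k < 1) ∧
      ∀ k, rhoB 0 ((X k : ℝ) : ℂ) = (k : ℝ) * rhoB 0 ((t : ℝ) : ℂ)) := by
  have hden : (0:ℝ) < 1 + t ^ 2 := by positivity
  have hdenC : (1 + (t : ℂ) ^ 2) ≠ 0 := by
    have : (1 + (t : ℂ) ^ 2) = ((1 + t ^ 2 : ℝ) : ℂ) := by push_cast; ring
    rw [this]
    exact_mod_cast hden.ne'
  -- explicit real/imaginary parts of N
  have hNexp : N = ((2 * t / (1 + t ^ 2) : ℝ) : ℂ) +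
      (((t ^ 2 - 1) / (1 + t ^ 2) : ℝ) : ℂ) * Complex.I := by
    rw [hN, div_eq_iff hdenC]
    push_cast
    first
    | (field_simp; ring)
    | field_simp
  have hre : N.re = 2 * t / (1 + t ^ 2) := by
    rw [hNexp]
    simp only [Complex.add_re, Complex.ofReal_re, Complex.mul_re, Complex.I_re,
      Complex.I_im, Complex.ofReal_im, mul_zero, zero_mul, mul_one, sub_zero]
    ring
  refine ⟨?_, ?_, ?_, hre, ?_, ?_, ?_⟩
  · -- on the line through I and t
    refine ⟨2 / (1 + t ^ 2), ?_⟩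
    rw [hN, Complex.real_smul, div_eq_iff hdenC]
    push_cast
    first
    | (field_simp; ring)
    | field_simp
  · -- on the unit circle
    rw [hNexp, Complex.norm_add_mul_I]
    rw [show (2 * t / (1 + t ^ 2)) ^ 2 + ((t ^ 2 - 1) / (1 + t ^ 2)) ^ 2 = 1 by
      field_simp; ring]
    exact Real.sqrt_one
  · -- N ≠ I
    intro h
    have hpos : 0 < N.re := by rw [hre]; positivity
    rw [h] at hpos
    simp at hpos
  · -- bounds on 2t/(1+t²)
    constructor
    · positivity
    · rw [div_lt_one hden]; nlinarith
  · -- the doubling identity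
    have hs0 : 0 ≤ 2 * t / (1 + t ^ 2) := by positivity
    have hs1 : 2 * t / (1 + t ^ 2) < 1 := by rw [div_lt_one hden]; nlinarith
    rw [rhoB_zero_real _ hs0 hs1, rhoB_zero_real t ht0.le ht1]
    have h1t : (0:ℝ) < 1 - t := by linarith
    have hB : (0:ℝ) < 1 - 2 * t / (1 + t ^ 2) := by linarith
    have key : (1 + 2 * t / (1 + t ^ 2)) / (1 - 2 * t / (1 + t ^ 2))
        = ((1 + t) / (1 - t)) ^ 2 := by
      rw [div_pow, div_eq_div_iff hB.ne' (pow_pos h1t 2).ne']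
      field_simp
      ring
    rw [key, Real.log_pow]
    norm_num
  · -- the iteration
    set r : ℝ := (1 + t) / (1 - t) with hr
    have h1t : (0:ℝ) < 1 - t := by linarith
    have hr1 : 1 < r := by
      rw [hr, lt_div_iff₀ h1t]; linarith
    refine ⟨fun k => (r ^ k - 1) / (r ^ k + 1), ?_, ?_, ?_⟩
    · -- X 1 = t
      show (r ^ 1 - 1) / (r ^ 1 + 1) = t
      rw [pow_one, div_eq_iff (by linarith : (r + 1 : ℝ) ≠ 0), hr]
      field_simp
      ring
    · -- bounds
      intro k
      have hk1 : (1:ℝ) ≤ r ^ k := one_le_pow₀ hr1.le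
      have hkpos : (0:ℝ) < r ^ k + 1 := by linarith
      constructor
      · apply div_nonneg (by linarith) hkpos.le
      · rw [div_lt_one hkpos]; linarith
    · -- distance identity
      intro k
      have hk1 : (1:ℝ) ≤ r ^ k := one_le_pow₀ hr1.le
      have hkpos : (0:ℝ) < r ^ k + 1 := by linarith
      rw [rhoB_zero_real _ (div_nonneg (by linarith) hkpos.le)
        (by rw [div_lt_one hkpos]; linarith), rhoB_zero_real t ht0.le ht1]
      have hB : (0:ℝ) < 1 - (r ^ k - 1) / (r ^ k + 1) := by
        rw [sub_pos, div_lt_one hkpos]; linarith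
      have key : (1 + (r ^ k - 1) / (r ^ k + 1)) / (1 - (r ^ k - 1) / (r ^ k + 1)) = r ^ k := by
        rw [div_eq_iff hB.ne']
        field_simp
        ring
      rw [key, ← hr, Real.log_pow]
end

section
/- Let x, y ∈ B²∖{0} with 0, x, y noncollinear and |x| ≠ |y|, and let x* = x/|x|², y* = y/|y|². Then the line through x and y* and the line through y and x* meet in the unique point u = (y(1−|x|²) + x(1−|y|²))/(1 − |x|²|y|²). -/
open Complex ComplexConjugate

/-- For `x, y ∈ B² \ {0}` with `0, x, y` noncollinear and `|x| ≠ |y|`, the line through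
`x, y*` and the line through `y, x*` meet in the unique point
`u = (y(1-|x|²) + x(1-|y|²))/(1 - |x|²|y|²)`. -/
theorem intersection_point_u (x y : ℂ)
    (hx1 : ‖x‖ < 1) (hy1 : ‖y‖ < 1) (hx0 : x ≠ 0) (hy0 : y ≠ 0)
    (hncol : ¬ Collinear ℝ ({0, x, y} : Set ℂ))
    (hxy : ‖x‖ ≠ ‖y‖)
    (xs ys : ℂ)
    (hxs : xs = x / ((‖x‖ : ℂ) ^ 2)) (hys : ys = y / ((‖y‖ : ℂ) ^ 2))
    (u : ℂ)
    (hu : u = (y * (1 - (‖x‖ : ℂ) ^ 2) + x * (1 - (‖y‖ : ℂ) ^ 2))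
        / (((1 - ‖x‖ ^ 2 * ‖y‖ ^ 2 : ℝ)) : ℂ)) :
    u ∈ lineThrough x ys ∧ u ∈ lineThrough y xs ∧
    ∀ p ∈ lineThrough x ys, p ∈ lineThrough y xs → p = u := by
  have hxpos : 0 < ‖x‖ := norm_pos_iff.mpr hx0
  have hypos : 0 < ‖y‖ := norm_pos_iff.mpr hy0
  have hA0 : (0:ℝ) < ‖x‖ ^ 2 := pow_pos hxpos 2
  have hB0 : (0:ℝ) < ‖y‖ ^ 2 := pow_pos hypos 2
  have hA1 : ‖x‖ ^ 2 < 1 := by nlinarith [norm_nonneg x]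
  have hB1 : ‖y‖ ^ 2 < 1 := by nlinarith [norm_nonneg y]
  have hD0 : (0:ℝ) < 1 - ‖x‖ ^ 2 * ‖y‖ ^ 2 := by nlinarith
  have hAc : ((‖x‖ : ℂ)) ^ 2 ≠ 0 := by
    simpa using pow_ne_zero 2 (norm_ne_zero_iff.mpr hx0)
  have hBc : ((‖y‖ : ℂ)) ^ 2 ≠ 0 := by
    simpa using pow_ne_zero 2 (norm_ne_zero_iff.mpr hy0)
  have hDc : (1 : ℂ) - (‖x‖ : ℂ) ^ 2 * (‖y‖ : ℂ) ^ 2 ≠ 0 := by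
    have h' : ((1 - ‖x‖ ^ 2 * ‖y‖ ^ 2 : ℝ) : ℂ) ≠ 0 := by
      exact_mod_cast ne_of_gt hD0
    push_cast at h'
    convert h' using 2
  have hucast : u = (y * (1 - (‖x‖ : ℂ) ^ 2) + x * (1 - (‖y‖ : ℂ) ^ 2))
      / (1 - (‖x‖ : ℂ) ^ 2 * (‖y‖ : ℂ) ^ 2) := by
    rw [hu]; push_cast; ring_nf
  have h1 : u ∈ lineThrough x ys := by
    refine ⟨‖y‖ ^ 2 * (1 - ‖x‖ ^ 2)
        / (1 - ‖x‖ ^ 2 * ‖y‖ ^ 2), ?_⟩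
    rw [hucast, hys, Complex.real_smul]
    push_cast
    have hyc : ((‖y‖ : ℝ) : ℂ) ≠ 0 := by exact_mod_cast hypos.ne'
    field_simp
    ring
  have h2 : u ∈ lineThrough y xs := by
    refine ⟨‖x‖ ^ 2 * (1 - ‖y‖ ^ 2)
        / (1 - ‖x‖ ^ 2 * ‖y‖ ^ 2), ?_⟩
    rw [hucast, hxs, Complex.real_smul]
    push_cast
    have hxc : ((‖x‖ : ℝ) : ℂ) ≠ 0 := by exact_mod_cast hxpos.ne'
    field_simp
    ring
  refine ⟨h1, h2, ?_⟩
  -- `x` and `y` are linearly independent over `ℝ`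
  have hind : ∀ a b : ℝ, a • x + b • y = 0 → a = 0 ∧ b = 0 := by
    intro a b hab
    by_contra h
    push_neg at h
    have hab' : (a:ℂ) * x + (b:ℂ) * y = 0 := by
      rw [← Complex.real_smul, ← Complex.real_smul]; exact hab
    rcases eq_or_ne a 0 with ha | ha
    · have hb : b ≠ 0 := h ha
      apply hy0
      have : (b:ℂ) * y = 0 := by rw [ha] at hab'; simpa using hab'
      rcases mul_eq_zero.mp this with h' | h'
      · exact absurd (by exact_mod_cast h') hb
      · exact h'
    · apply hncol
      have h0 : (0:ℂ) ∈ ({0, x, y} : Set ℂ) := by simp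
      rw [collinear_iff_of_mem h0]
      refine ⟨y, ?_⟩
      intro p hp
      simp only [Set.mem_insert_iff, Set.mem_singleton_iff] at hp
      rcases hp with h' | h' | h'
      · exact ⟨0, by simp [h']⟩
      · refine ⟨-b / a, ?_⟩
        rw [h']
        simp only [vadd_eq_add, add_zero, Complex.real_smul]
        have hac : (a:ℂ) ≠ 0 := by exact_mod_cast ha
        push_cast
        field_simp
        linear_combination hab'
      · exact ⟨1, by simp [h']⟩
  intro p hp hq
  obtain ⟨s, hs⟩ := hp
  obtain ⟨r, hr⟩ := hq
  obtain ⟨t1, ht1⟩ := h1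
  obtain ⟨t2, ht2⟩ := h2
  rw [Complex.real_smul] at hs hr ht1 ht2
  have e3 : ((s - t1 : ℝ):ℂ) * (ys - x) = ((r - t2 : ℝ):ℂ) * (xs - y) := by
    push_cast
    linear_combination (hs.symm.trans hr) - (ht1.symm.trans ht2)
  rw [hys, hxs] at e3
  have key : ((-((s - t1) * (‖x‖ ^ 2 * ‖y‖ ^ 2))
        - (r - t2) * ‖y‖ ^ 2 : ℝ) : ℂ) * x
      + (((s - t1) * ‖x‖ ^ 2
        + (r - t2) * (‖x‖ ^ 2 * ‖y‖ ^ 2) : ℝ) : ℂ) * y = 0 := by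
    have hxc : ((‖x‖ : ℝ) : ℂ) ≠ 0 := by exact_mod_cast hxpos.ne'
    have hyc : ((‖y‖ : ℝ) : ℂ) ≠ 0 := by exact_mod_cast hypos.ne'
    field_simp at e3
    push_cast at e3 ⊢
    linear_combination e3
  have hzz := hind _ _ (by
    rw [Complex.real_smul, Complex.real_smul]; exact key)
  obtain ⟨hα, hβ⟩ := hzz
  have hρ : r - t2 = 0 := by
    have h4 : (r - t2) * (‖y‖ ^ 2 * (‖x‖ ^ 2 * ‖y‖ ^ 2 - 1))
        = 0 := by linear_combination ‖y‖ ^ 2 * hβ + hα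
    rcases mul_eq_zero.mp h4 with h' | h'
    · exact h'
    · exfalso
      rcases mul_eq_zero.mp h' with h'' | h''
      · exact ne_of_gt hB0 h''
      · nlinarith
  have hσ : s - t1 = 0 := by
    have h5 : (s - t1) * ‖x‖ ^ 2 = 0 := by
      linear_combination hβ - (‖x‖ ^ 2 * ‖y‖ ^ 2) * hρ
    rcases mul_eq_zero.mp h5 with h' | h'
    · exact h'
    · exact absurd h' (ne_of_gt hA0)
  have hst : s = t1 := by linarith
  rw [hs, ht1, hst]
end

section
/- Let x, y ∈ B²∖{0} with 0, x, y noncollinear and |x| ≠ |y|, let x* = x/|x|², y* = y/|y|², and let S¹(a,r_a) be the circle through x, y, x*, y* orthogonal to the unit circle. Assume the arc of S¹(a,r_a) from x* to y* through x and y is a semicircle, i.e., |x* − y*| = 2r_a. Let S¹(c,r_c) be the circle through 0, x, y, let z be the intersection point of the line through 0 and c with S¹(a,r_a) lying in B², and let z' be the other intersection point (lying outside the closed unit disk). Then: (i) z is the hyperbolic midpoint of x and y; (ii) S¹(c,r_c) is orthogonal to S¹(a,r_a); (iii) the absolute ratios satisfy |z, x, x*, z'| = |z, y, y*, z'|. 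-/
open Complex ComplexConjugate

set_option maxHeartbeats 2000000

private lemma sq_cancel {a b : ℝ} (ha : 0 ≤ a) (hb : 0 ≤ b) (h : a ^ 2 = b ^ 2) : a = b := by
  nlinarith [sq_nonneg (a - b), sq_nonneg (a + b)]

private lemma nsub (u v : ℂ) : Complex.normSq (u - v)
    = Complex.normSq u - 2 * (u * conj v).re + Complex.normSq v := by
  simp only [Complex.normSq_apply, Complex.sub_re, Complex.sub_im, Complex.mul_re,
    Complex.conj_re, Complex.conj_im]
  ring

private lemma reswap (u v : ℂ) : (u * conj v).re = (v * conj u).re := by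
  simp only [Complex.mul_re, Complex.conj_re, Complex.conj_im]
  ring

private lemma lagrange (u v w : ℂ) :
    Complex.normSq w * (Complex.normSq u * Complex.normSq v - ((u * conj v).re) ^ 2)
      = Complex.normSq v * ((u * conj w).re) ^ 2 + Complex.normSq u * ((v * conj w).re) ^ 2
        - 2 * (u * conj v).re * (u * conj w).re * (v * conj w).re := by
  simp only [Complex.normSq_apply, Complex.mul_re, Complex.conj_re, Complex.conj_im]
  ring

private lemma thales (w u v : ℂ) :
    Complex.normSq (2 * w - (u + v)) - Complex.normSq (u - v)
      = 4 * (((w - u) * conj (w - v)).re) := by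
  simp only [Complex.normSq_apply, Complex.sub_re, Complex.sub_im, Complex.add_re,
    Complex.add_im, Complex.mul_re, Complex.mul_im, Complex.conj_re, Complex.conj_im,
    Complex.re_ofNat, Complex.im_ofNat]
  ring

private lemma parallelogram (u v w : ℂ) :
    Complex.normSq (u + v - 2 * w)
      = 2 * Complex.normSq (u - w) + 2 * Complex.normSq (v - w) - Complex.normSq (u - v) := by
  simp only [Complex.normSq_apply, Complex.sub_re, Complex.sub_im, Complex.add_re,
    Complex.add_im, Complex.mul_re, Complex.mul_im, Complex.re_ofNat, Complex.im_ofNat]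
  ring

private lemma arg_simp {τ A B : ℝ} (hτ : 0 ≤ τ) (hA : 0 < A) :
    Real.sqrt (τ * A) / (Real.sqrt A * Real.sqrt B) = Real.sqrt τ / Real.sqrt B := by
  rw [Real.sqrt_mul hτ, mul_comm (Real.sqrt A),
    mul_div_mul_right _ _ (ne_of_gt (Real.sqrt_pos.mpr hA))]

private lemma ratio_helper {A P τ : ℝ} (hA : 0 < A) (hP : 0 < P) (hτ : 0 < τ) :
    Real.sqrt (A / P) * Real.sqrt (A / τ) / (Real.sqrt (τ * A) * Real.sqrt (A / P)) = 1 / τ := by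
  rw [mul_comm (Real.sqrt (τ * A)),
    mul_div_mul_left _ _ (ne_of_gt (Real.sqrt_pos.mpr (div_pos hA hP))),
    ← Real.sqrt_div (le_of_lt (div_pos hA hτ))]
  have h : A / τ / (τ * A) = (1 / τ) ^ 2 := by
    field_simp
  rw [h, Real.sqrt_sq (by positivity)]

/-- Suppose the arc of `S¹(a, r_a)` from `x*` to `y*` through `x` and `y` is a
semicircle, i.e. `|x* - y*| = 2 r_a`. Let `S¹(c, r_c)` be the circle through `0, x, y`,
let `z` be the intersection of the line through `0` and `c` with `S¹(a, r_a)` in `B²`,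
and `z'` the other intersection point (outside the closed unit disk). Then `z` is the
hyperbolic midpoint of `x` and `y`, the circles `S¹(c, r_c)` and `S¹(a, r_a)` are
orthogonal, and the absolute ratios satisfy `|z,x,x*,z'| = |z,y,y*,z'|`. -/
theorem semicircle_midpoint_construction (x y : ℂ)
    (hx1 : ‖x‖ < 1) (hy1 : ‖y‖ < 1) (hx0 : x ≠ 0) (hy0 : y ≠ 0)
    (hncol : ¬ Collinear ℝ ({0, x, y} : Set ℂ))
    (hxy : ‖x‖ ≠ ‖y‖)
    (xstar ystar : ℂ)
    (hxstar : xstar = x / ((‖x‖ : ℂ) ^ 2))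
    (hystar : ystar = y / ((‖y‖ : ℂ) ^ 2))
    (a : ℂ) (ra : ℝ)
    (ha : a = Complex.I * (y * (1 + (‖x‖ : ℂ) ^ 2)
        - x * (1 + (‖y‖ : ℂ) ^ 2))
        / ((2 * (x.im * y.re - x.re * y.im) : ℝ) : ℂ))
    (hra : ra = ‖x - y‖ * ‖x * (‖y‖ : ℂ) ^ 2 - y‖
        / (2 * ‖y‖ * |x.re * y.im - x.im * y.re|))
    (hsemi : ‖xstar - ystar‖ = 2 * ra)
    (c : ℂ) (rc : ℝ)
    (hc0 : ‖0 - c‖ = rc) (hcx : ‖x - c‖ = rc)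
    (hcy : ‖y - c‖ = rc)
    (z z' : ℂ)
    (hz1 : z ∈ lineThrough 0 c) (hz2 : ‖z - a‖ = ra)
    (hz3 : ‖z‖ < 1)
    (hz'1 : z' ∈ lineThrough 0 c) (hz'2 : ‖z' - a‖ = ra)
    (hz'3 : 1 < ‖z'‖) :
    (rhoB x z = rhoB z y ∧ rhoB z y = rhoB x y / 2) ∧
    ‖c - a‖ ^ 2 = rc ^ 2 + ra ^ 2 ∧
    ‖z - xstar‖ * ‖x - z'‖
        / (‖z - x‖ * ‖xstar - z'‖)
      = ‖z - ystar‖ * ‖y - z'‖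
        / (‖z - y‖ * ‖ystar - z'‖) := by
  -- basic positivity
  have hX0 : 0 < Complex.normSq x := Complex.normSq_pos.mpr hx0
  have hY0 : 0 < Complex.normSq y := Complex.normSq_pos.mpr hy0
  have hXne : Complex.normSq x ≠ 0 := ne_of_gt hX0
  have hYne : Complex.normSq y ≠ 0 := ne_of_gt hY0
  have hX1 : Complex.normSq x < 1 := by
    rw [← Complex.sq_norm]
    exact pow_lt_one₀ (norm_nonneg x) hx1 two_ne_zero
  have hY1 : Complex.normSq y < 1 := by
    rw [← Complex.sq_norm]
    exact pow_lt_one₀ (norm_nonneg y) hy1 two_ne_zero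
  -- noncollinearity gives nonzero determinant
  have hd : x.im * y.re - x.re * y.im ≠ 0 := by
    intro h
    apply hncol
    rw [collinear_iff_of_mem (Set.mem_insert 0 {x, y})]
    refine ⟨x, fun p hp => ?_⟩
    rcases hp with rfl | hp'
    · exact ⟨0, by simp⟩
    rcases hp' with rfl | hp''
    · exact ⟨1, by simp⟩
    rcases hp'' with rfl
    refine ⟨(x.re * p.re + x.im * p.im) / Complex.normSq x, ?_⟩
    rw [vadd_eq_add, add_zero, Complex.real_smul]
    apply Complex.ext
    · rw [Complex.re_ofReal_mul, div_mul_eq_mul_div, eq_comm, div_eq_iff hXne,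
        Complex.normSq_apply]
      linear_combination (-x.im) * h
    · rw [Complex.im_ofReal_mul, div_mul_eq_mul_div, eq_comm, div_eq_iff hXne,
        Complex.normSq_apply]
      linear_combination x.re * h
  have hd2 : (2 : ℝ) * (x.im * y.re - x.re * y.im) ≠ 0 := by
    intro h; exact hd (by linarith only [h])
  -- cast facts
  have hXc : ((‖x‖ : ℂ)) ^ 2 = ((Complex.normSq x : ℝ) : ℂ) := by
    rw [← Complex.ofReal_pow, Complex.sq_norm]
  have hYc : ((‖y‖ : ℂ)) ^ 2 = ((Complex.normSq y : ℝ) : ℂ) := by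
    rw [← Complex.ofReal_pow, Complex.sq_norm]
  -- coordinates of a
  have hare : a.re = (x.im * (1 + Complex.normSq y) - y.im * (1 + Complex.normSq x))
      / (2 * (x.im * y.re - x.re * y.im)) := by
    rw [ha, hXc, hYc, Complex.div_ofReal_re]
    congr 1
    simp only [Complex.mul_re, Complex.mul_im, Complex.add_im, Complex.add_re, Complex.sub_re,
      Complex.sub_im, Complex.I_re, Complex.I_im, Complex.ofReal_re, Complex.ofReal_im,
      Complex.one_re, Complex.one_im]
    ring
  have haim : a.im = (y.re * (1 + Complex.normSq x) - x.re * (1 + Complex.normSq y))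
      / (2 * (x.im * y.re - x.re * y.im)) := by
    rw [ha, hXc, hYc, Complex.div_ofReal_im]
    congr 1
    simp only [Complex.mul_re, Complex.mul_im, Complex.add_im, Complex.add_re, Complex.sub_re,
      Complex.sub_im, Complex.I_re, Complex.I_im, Complex.ofReal_re, Complex.ofReal_im,
      Complex.one_re, Complex.one_im]
    ring
  -- the square of ra
  have hra2 : ra ^ 2 = Complex.normSq (x - y)
      * Complex.normSq (x * ((Complex.normSq y : ℝ) : ℂ) - y)
      / (4 * Complex.normSq y * (x.im * y.re - x.re * y.im) ^ 2) := by
    rw [hra, hYc, div_pow, mul_pow, mul_pow, mul_pow, Complex.sq_norm, Complex.sq_norm,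
      Complex.sq_norm, _root_.sq_abs]
    congr 1
    ring
  have hra0 : 0 ≤ ra := by
    have h2 : 0 ≤ 2 * ra := hsemi ▸ norm_nonneg _
    linarith only [h2]
  -- x*, y* coordinates
  have hxsre : xstar.re = x.re / Complex.normSq x := by
    rw [hxstar, hXc, Complex.div_ofReal_re]
  have hxsim : xstar.im = x.im / Complex.normSq x := by
    rw [hxstar, hXc, Complex.div_ofReal_im]
  have hysre : ystar.re = y.re / Complex.normSq y := by
    rw [hystar, hYc, Complex.div_ofReal_re]
  have hysim : ystar.im = y.im / Complex.normSq y := by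
    rw [hystar, hYc, Complex.div_ofReal_im]
  -- the three circle identities
  have hI3 : Complex.normSq (xstar - a) = ra ^ 2 := by
    rw [hra2, Complex.normSq_apply, Complex.sub_re, Complex.sub_im, hxsre, hxsim, hare, haim]
    rw [Complex.normSq_apply, Complex.normSq_apply]
    simp only [Complex.sub_re, Complex.sub_im, Complex.mul_re, Complex.mul_im,
      Complex.ofReal_re, Complex.ofReal_im, Complex.normSq_apply]
    have hYe : y.re * y.re + y.im * y.im ≠ 0 := by
      rw [← Complex.normSq_apply]; exact hYne
    have hXe : x.re * x.re + x.im * x.im ≠ 0 := by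
      rw [← Complex.normSq_apply]; exact hXne
    have hYe2 : y.re ^ 2 + y.im ^ 2 ≠ 0 := by simpa only [sq] using hYe
    have hXe2 : x.re ^ 2 + x.im ^ 2 ≠ 0 := by simpa only [sq] using hXe
    field_simp
    ring
  have hI4 : Complex.normSq (ystar - a) = ra ^ 2 := by
    rw [hra2, Complex.normSq_apply, Complex.sub_re, Complex.sub_im, hysre, hysim, hare, haim]
    rw [Complex.normSq_apply, Complex.normSq_apply]
    simp only [Complex.sub_re, Complex.sub_im, Complex.mul_re, Complex.mul_im,
      Complex.ofReal_re, Complex.ofReal_im, Complex.normSq_apply]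
    have hYe : y.re * y.re + y.im * y.im ≠ 0 := by
      rw [← Complex.normSq_apply]; exact hYne
    have hXe : x.re * x.re + x.im * x.im ≠ 0 := by
      rw [← Complex.normSq_apply]; exact hXne
    have hYe2 : y.re ^ 2 + y.im ^ 2 ≠ 0 := by simpa only [sq] using hYe
    have hXe2 : x.re ^ 2 + x.im ^ 2 ≠ 0 := by simpa only [sq] using hXe
    have hd' : y.re * x.im - y.im * x.re ≠ 0 := by intro h; exact hd (by linarith only [h])
    field_simp
    ring
  have hI5 : Complex.normSq a = 1 + ra ^ 2 := by
    rw [hra2, Complex.normSq_apply, hare, haim]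
    rw [Complex.normSq_apply, Complex.normSq_apply]
    simp only [Complex.sub_re, Complex.sub_im, Complex.mul_re, Complex.mul_im,
      Complex.ofReal_re, Complex.ofReal_im, Complex.normSq_apply]
    have hYe : y.re * y.re + y.im * y.im ≠ 0 := by
      rw [← Complex.normSq_apply]; exact hYne
    have hXe : x.re * x.re + x.im * x.im ≠ 0 := by
      rw [← Complex.normSq_apply]; exact hXne
    have hYe2 : y.re ^ 2 + y.im ^ 2 ≠ 0 := by simpa only [sq] using hYe
    have hXe2 : x.re ^ 2 + x.im ^ 2 ≠ 0 := by simpa only [sq] using hXe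
    have hd' : x.im * y.re - y.im * x.re ≠ 0 := by intro h; exact hd (by linarith only [h])
    field_simp
    ring
  -- the semicircle hypothesis forces a to be the midpoint of x*, y*
  have hsemi2 : Complex.normSq (xstar - ystar) = 4 * ra ^ 2 := by
    rw [← Complex.sq_norm, hsemi]
    ring
  have hm : xstar + ystar = 2 * a := by
    have hp := parallelogram xstar ystar a
    rw [hI3, hI4, hsemi2] at hp
    have h0 : Complex.normSq (xstar + ystar - 2 * a) = 0 := by linarith only [hp]
    have := Complex.normSq_eq_zero.mp h0
    linear_combination this
  -- circle through 0, x, y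
  have hcx2 : Complex.normSq (x - c) = Complex.normSq c := by
    rw [← Complex.sq_norm, hcx, ← hc0, Complex.sq_norm, zero_sub, Complex.normSq_neg]
  have hcy2 : Complex.normSq (y - c) = Complex.normSq c := by
    rw [← Complex.sq_norm, hcy, ← hc0, Complex.sq_norm, zero_sub, Complex.normSq_neg]
  have hRxc : (x * conj c).re = Complex.normSq x / 2 := by
    have h := nsub x c
    rw [hcx2] at h
    linarith only [h]
  have hRyc : (y * conj c).re = Complex.normSq y / 2 := by
    have h := nsub y c
    rw [hcy2] at h
    linarith only [h]
  have hrc2 : rc ^ 2 = Complex.normSq c := by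
    rw [← hc0, Complex.sq_norm, zero_sub, Complex.normSq_neg]
  have hcne : c ≠ 0 := by
    intro h
    rw [h] at hRxc
    simp at hRxc
    exact hXne (by linarith only [hRxc])
  -- parametrize z and z'
  obtain ⟨t, hzt0⟩ := hz1
  obtain ⟨t', hzt0'⟩ := hz'1
  have hzt : z = (t : ℂ) * c := by
    rw [hzt0, zero_add, sub_zero, Complex.real_smul]
  have hzt' : z' = (t' : ℂ) * c := by
    rw [hzt0', zero_add, sub_zero, Complex.real_smul]
  -- Re (c * conj a) = 1/2
  have hca : (c * conj a).re = 1 / 2 := by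
    have hxs : (c * conj xstar).re = 1 / 2 := by
      rw [hxstar, hXc]
      rw [map_div₀, Complex.conj_ofReal, ← mul_div_assoc, Complex.div_ofReal_re, reswap c x,
        hRxc]
      rw [div_div, mul_comm (2 : ℝ), ← div_div, div_self hXne]
    have hys : (c * conj ystar).re = 1 / 2 := by
      rw [hystar, hYc]
      rw [map_div₀, Complex.conj_ofReal, ← mul_div_assoc, Complex.div_ofReal_re, reswap c y,
        hRyc]
      rw [div_div, mul_comm (2 : ℝ), ← div_div, div_self hYne]
    have h2 : (c * conj (xstar + ystar)).re = 1 := by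
      rw [map_add, mul_add, Complex.add_re, hxs, hys]
      norm_num
    rw [hm] at h2
    have h3 : c * conj (2 * a) = 2 * (c * conj a) := by
      rw [map_mul]
      rw [map_ofNat]
      ring
    rw [h3] at h2
    have h4 : (2 * (c * conj a)).re = 2 * (c * conj a).re := by
      simp [Complex.mul_re]
    rw [h4] at h2
    linarith only [h2]
  -- normSq of z, z'
  have hnz2 : Complex.normSq (z - a) = ra ^ 2 := by rw [← Complex.sq_norm, hz2]
  have hnz2' : Complex.normSq (z' - a) = ra ^ 2 := by rw [← Complex.sq_norm, hz'2]
  have hnzt : Complex.normSq z = t ^ 2 * Complex.normSq c := by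
    rw [hzt, Complex.normSq_mul, Complex.normSq_ofReal]
    ring
  have hnzt' : Complex.normSq z' = t' ^ 2 * Complex.normSq c := by
    rw [hzt', Complex.normSq_mul, Complex.normSq_ofReal]
    ring
  have hza : (z * conj a).re = t * (1 / 2) := by
    rw [hzt]
    have : (t : ℂ) * c * conj a = (t : ℂ) * (c * conj a) := by ring
    rw [this, Complex.re_ofReal_mul, hca]
  have hza' : (z' * conj a).re = t' * (1 / 2) := by
    rw [hzt']
    have : (t' : ℂ) * c * conj a = (t' : ℂ) * (c * conj a) := by ring
    rw [this, Complex.re_ofReal_mul, hca]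
  -- the quadratic for t and t'
  have hQ : Complex.normSq c * t ^ 2 - t + 1 = 0 := by
    have h := nsub z a
    rw [hnz2, hI5, hnzt, hza] at h
    linarith only [h]
  have hQ' : Complex.normSq c * t' ^ 2 - t' + 1 = 0 := by
    have h := nsub z' a
    rw [hnz2', hI5, hnzt', hza'] at h
    linarith only [h]
  -- Vieta
  have htne : t ≠ t' := by
    intro h
    have : z = z' := by rw [hzt, hzt', h]
    rw [this] at hz3
    linarith
  have hsum : Complex.normSq c * (t + t') = 1 := by
    have h0 : (t - t') * (Complex.normSq c * (t + t') - 1) = 0 := by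
      linear_combination hQ - hQ'
    rcases mul_eq_zero.mp h0 with h1 | h1
    · exact absurd (by linarith only [h1] : t = t') htne
    · linarith only [h1]
  have hprod : Complex.normSq c * (t * t') = 1 := by
    linear_combination t * hsum - hQ
  -- z' is the inversion of z
  have hzz' : conj z * z' = 1 := by
    rw [hzt, hzt', map_mul, Complex.conj_ofReal]
    have h1 : (t : ℂ) * conj c * ((t' : ℂ) * c) = ((t * t' : ℝ) : ℂ) * (c * conj c) := by
      push_cast
      ring
    rw [h1, Complex.mul_conj, ← Complex.ofReal_mul]
    rw [show t * t' * Complex.normSq c = 1 by linarith only [hprod]; ]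
    norm_num
  -- scalar values
  have hPz : Complex.normSq z = t - 1 := by
    rw [hnzt]
    linarith only [hQ]
  have hz0 : z ≠ 0 := by
    intro h
    rw [h] at hzz'
    simp at hzz'
  have ht1 : 1 < t := by
    have := Complex.normSq_pos.mpr hz0
    rw [hPz] at this
    linarith only [this]
  have ht2 : t < 2 := by
    have h1 : Complex.normSq z < 1 := by
      rw [← Complex.sq_norm]
      exact pow_lt_one₀ (norm_nonneg z) hz3 two_ne_zero
    rw [hPz] at h1
    linarith only [h1]
  have hRxz : (x * conj z).re = t * (Complex.normSq x / 2) := by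
    rw [hzt, map_mul, Complex.conj_ofReal]
    have : x * ((t : ℂ) * conj c) = (t : ℂ) * (x * conj c) := by ring
    rw [this, Complex.re_ofReal_mul, hRxc]
  have hRyz : (y * conj z).re = t * (Complex.normSq y / 2) := by
    rw [hzt, map_mul, Complex.conj_ofReal]
    have : y * ((t : ℂ) * conj c) = (t : ℂ) * (y * conj c) := by ring
    rw [this, Complex.re_ofReal_mul, hRyc]
  -- the key semicircle relation : Re (x conj y) = |x|^2 |y|^2
  have hW : (x * conj y).re = Complex.normSq x * Complex.normSq y := by
    have hth := thales z xstar ystar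
    rw [hm] at hth
    have h1 : Complex.normSq (2 * z - 2 * a) = 4 * ra ^ 2 := by
      have : (2 : ℂ) * z - 2 * a = 2 * (z - a) := by ring
      rw [this, Complex.normSq_mul, hnz2,
        show Complex.normSq 2 = 4 by norm_num [Complex.normSq_apply]]
    rw [h1, hsemi2] at hth
    have hK : ((z - xstar) * conj (z - ystar)).re = 0 := by linarith only [hth]
    have hexp : (z - xstar) * conj (z - ystar)
        = z * conj z - z * conj ystar - xstar * conj z + xstar * conj ystar := by
      rw [map_sub]
      ring
    rw [hexp] at hK
    simp only [Complex.add_re, Complex.sub_re] at hK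
    have e1 : (z * conj z).re = t - 1 := by
      rw [Complex.mul_conj, Complex.ofReal_re, hPz]
    have e2 : (z * conj ystar).re = t / 2 := by
      rw [hystar, hYc, map_div₀, Complex.conj_ofReal, ← mul_div_assoc, Complex.div_ofReal_re,
        reswap z y, hRyz]
      field_simp
    have e3 : (xstar * conj z).re = t / 2 := by
      rw [hxstar, hXc, div_mul_eq_mul_div, Complex.div_ofReal_re, hRxz]
      field_simp
    have e4 : (xstar * conj ystar).re
        = (x * conj y).re / (Complex.normSq x * Complex.normSq y) := by
      rw [hxstar, hystar, hXc, hYc, map_div₀, Complex.conj_ofReal, div_mul_div_comm,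
        ← Complex.ofReal_mul, Complex.div_ofReal_re]
    rw [e1, e2, e3, e4] at hK
    have h5 : (x * conj y).re / (Complex.normSq x * Complex.normSq y) = 1 := by linarith
    rw [div_eq_one_iff_eq (mul_ne_zero hXne hYne)] at h5
    exact h5
  have hSxy : Complex.normSq (x - y)
      = Complex.normSq x + Complex.normSq y - 2 * (Complex.normSq x * Complex.normSq y) := by
    rw [nsub, hW]
    ring
  -- the master quadratic relation
  have hF6 : (Complex.normSq x + Complex.normSq y
      - 2 * (Complex.normSq x * Complex.normSq y)) * t ^ 2
      = 4 * (1 - Complex.normSq x * Complex.normSq y) * (t - 1) := by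
    have hL := lagrange x y c
    rw [hRxc, hRyc, hW] at hL
    have hXYne : Complex.normSq x * Complex.normSq y ≠ 0 := mul_ne_zero hXne hYne
    have hF6a : Complex.normSq c * (1 - Complex.normSq x * Complex.normSq y)
        = (Complex.normSq x + Complex.normSq y
          - 2 * (Complex.normSq x * Complex.normSq y)) / 4 := by
      have h6 : Complex.normSq c * (1 - Complex.normSq x * Complex.normSq y)
          * (Complex.normSq x * Complex.normSq y)
          = ((Complex.normSq x + Complex.normSq y
            - 2 * (Complex.normSq x * Complex.normSq y)) / 4)
          * (Complex.normSq x * Complex.normSq y) := by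
        linear_combination hL
      exact mul_right_cancel₀ hXYne h6
    linear_combination (-4 * t ^ 2) * hF6a + 4 * (1 - Complex.normSq x * Complex.normSq y) * hQ
  -- normSq of the relevant differences
  have nzx : Complex.normSq (z - x) = (t - 1) * (1 - Complex.normSq x) := by
    rw [nsub, hPz, reswap z x, hRxz]
    ring
  have nzy : Complex.normSq (z - y) = (t - 1) * (1 - Complex.normSq y) := by
    rw [nsub, hPz, reswap z y, hRyz]
    ring
  have hXcne : ((Complex.normSq x : ℝ) : ℂ) ≠ 0 := Complex.ofReal_ne_zero.mpr hXne
  have hYcne : ((Complex.normSq y : ℝ) : ℂ) ≠ 0 := Complex.ofReal_ne_zero.mpr hYne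
  have hxsX : xstar * ((Complex.normSq x : ℝ) : ℂ) = x := by
    rw [hxstar, hXc]
    exact div_mul_cancel₀ x hXcne
  have hysY : ystar * ((Complex.normSq y : ℝ) : ℂ) = y := by
    rw [hystar, hYc]
    exact div_mul_cancel₀ y hYcne
  have htau : (0 : ℝ) < t - 1 := by linarith only [ht1]
  have htau' : t - 1 ≠ 0 := ne_of_gt htau
  have n1x : Complex.normSq (z - xstar) = (1 - Complex.normSq x) / Complex.normSq x := by
    have e : (z - xstar) * ((Complex.normSq x : ℝ) : ℂ)
        = z * ((Complex.normSq x : ℝ) : ℂ) - x := by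
      rw [sub_mul, hxsX]
    have e3 : (z * ((Complex.normSq x : ℝ) : ℂ) * conj x).re
        = Complex.normSq x * (t * (Complex.normSq x / 2)) := by
      have h7 : z * ((Complex.normSq x : ℝ) : ℂ) * conj x
          = ((Complex.normSq x : ℝ) : ℂ) * (z * conj x) := by ring
      rw [h7, Complex.re_ofReal_mul, reswap z x, hRxz]
    have e4 : Complex.normSq (z * ((Complex.normSq x : ℝ) : ℂ) - x)
        = (1 - Complex.normSq x) * Complex.normSq x := by
      rw [nsub (z * ((Complex.normSq x : ℝ) : ℂ)) x, Complex.normSq_mul,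
        Complex.normSq_ofReal, hPz, e3]
      ring
    have e5 : Complex.normSq (z - xstar) * (Complex.normSq x * Complex.normSq x)
        = (1 - Complex.normSq x) * Complex.normSq x := by
      rw [← Complex.normSq_ofReal (Complex.normSq x), ← Complex.normSq_mul, e, e4]
    rw [eq_div_iff hXne]
    apply mul_right_cancel₀ hXne
    linear_combination e5
  have n1y : Complex.normSq (z - ystar) = (1 - Complex.normSq y) / Complex.normSq y := by
    have e : (z - ystar) * ((Complex.normSq y : ℝ) : ℂ)
        = z * ((Complex.normSq y : ℝ) : ℂ) - y := by
      rw [sub_mul, hysY]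
    have e3 : (z * ((Complex.normSq y : ℝ) : ℂ) * conj y).re
        = Complex.normSq y * (t * (Complex.normSq y / 2)) := by
      have h7 : z * ((Complex.normSq y : ℝ) : ℂ) * conj y
          = ((Complex.normSq y : ℝ) : ℂ) * (z * conj y) := by ring
      rw [h7, Complex.re_ofReal_mul, reswap z y, hRyz]
    have e4 : Complex.normSq (z * ((Complex.normSq y : ℝ) : ℂ) - y)
        = (1 - Complex.normSq y) * Complex.normSq y := by
      rw [nsub (z * ((Complex.normSq y : ℝ) : ℂ)) y, Complex.normSq_mul,
        Complex.normSq_ofReal, hPz, e3]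
      ring
    have e5 : Complex.normSq (z - ystar) * (Complex.normSq y * Complex.normSq y)
        = (1 - Complex.normSq y) * Complex.normSq y := by
      rw [← Complex.normSq_ofReal (Complex.normSq y), ← Complex.normSq_mul, e, e4]
    rw [eq_div_iff hYne]
    apply mul_right_cancel₀ hYne
    linear_combination e5
  have n2x : Complex.normSq (x - z') = (1 - Complex.normSq x) / (t - 1) := by
    have e : (x - z') * conj z = x * conj z - 1 := by
      rw [sub_mul, mul_comm z' (conj z), hzz']
    have e4 : Complex.normSq (x * conj z - 1) = 1 - Complex.normSq x := by
      rw [nsub (x * conj z) 1, Complex.normSq_mul, Complex.normSq_conj, hPz,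
        Complex.normSq_one, map_one, mul_one, hRxz]
      ring
    rw [eq_div_iff htau']
    calc Complex.normSq (x - z') * (t - 1)
        = Complex.normSq ((x - z') * conj z) := by
          rw [Complex.normSq_mul, Complex.normSq_conj, hPz]
      _ = 1 - Complex.normSq x := by rw [e, e4]
  have n2y : Complex.normSq (y - z') = (1 - Complex.normSq y) / (t - 1) := by
    have e : (y - z') * conj z = y * conj z - 1 := by
      rw [sub_mul, mul_comm z' (conj z), hzz']
    have e4 : Complex.normSq (y * conj z - 1) = 1 - Complex.normSq y := by
      rw [nsub (y * conj z) 1, Complex.normSq_mul, Complex.normSq_conj, hPz,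
        Complex.normSq_one, map_one, mul_one, hRyz]
      ring
    rw [eq_div_iff htau']
    calc Complex.normSq (y - z') * (t - 1)
        = Complex.normSq ((y - z') * conj z) := by
          rw [Complex.normSq_mul, Complex.normSq_conj, hPz]
      _ = 1 - Complex.normSq y := by rw [e, e4]
  have n4x : Complex.normSq (xstar - z') = (1 - Complex.normSq x) / Complex.normSq x := by
    have e : (xstar - z') * (conj z * ((Complex.normSq x : ℝ) : ℂ))
        = x * conj z - ((Complex.normSq x : ℝ) : ℂ) := by
      have h7 : (xstar - z') * (conj z * ((Complex.normSq x : ℝ) : ℂ))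
          = (xstar * ((Complex.normSq x : ℝ) : ℂ)) * conj z
            - (conj z * z') * ((Complex.normSq x : ℝ) : ℂ) := by ring
      rw [h7, hxsX, hzz', one_mul]
    have e3 : (x * conj z * conj ((Complex.normSq x : ℝ) : ℂ)).re
        = Complex.normSq x * (t * (Complex.normSq x / 2)) := by
      rw [Complex.conj_ofReal]
      have h7 : x * conj z * ((Complex.normSq x : ℝ) : ℂ)
          = ((Complex.normSq x : ℝ) : ℂ) * (x * conj z) := by ring
      rw [h7, Complex.re_ofReal_mul, hRxz]
    have e4 : Complex.normSq (x * conj z - ((Complex.normSq x : ℝ) : ℂ))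
        = Complex.normSq x * ((t - 1) * (1 - Complex.normSq x)) := by
      rw [nsub (x * conj z) ((Complex.normSq x : ℝ) : ℂ), Complex.normSq_mul,
        Complex.normSq_conj, hPz, Complex.normSq_ofReal, e3]
      ring
    have e5 : Complex.normSq (xstar - z') * ((t - 1) * (Complex.normSq x * Complex.normSq x))
        = Complex.normSq x * ((t - 1) * (1 - Complex.normSq x)) := by
      calc Complex.normSq (xstar - z') * ((t - 1) * (Complex.normSq x * Complex.normSq x))
          = Complex.normSq ((xstar - z') * (conj z * ((Complex.normSq x : ℝ) : ℂ))) := by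
            rw [Complex.normSq_mul, Complex.normSq_mul, Complex.normSq_conj, hPz,
              Complex.normSq_ofReal]
        _ = Complex.normSq x * ((t - 1) * (1 - Complex.normSq x)) := by rw [e, e4]
    rw [eq_div_iff hXne]
    apply mul_right_cancel₀ htau'
    apply mul_right_cancel₀ hXne
    linear_combination e5
  have n4y : Complex.normSq (ystar - z') = (1 - Complex.normSq y) / Complex.normSq y := by
    have e : (ystar - z') * (conj z * ((Complex.normSq y : ℝ) : ℂ))
        = y * conj z - ((Complex.normSq y : ℝ) : ℂ) := by
      have h7 : (ystar - z') * (conj z * ((Complex.normSq y : ℝ) : ℂ))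
          = (ystar * ((Complex.normSq y : ℝ) : ℂ)) * conj z
            - (conj z * z') * ((Complex.normSq y : ℝ) : ℂ) := by ring
      rw [h7, hysY, hzz', one_mul]
    have e3 : (y * conj z * conj ((Complex.normSq y : ℝ) : ℂ)).re
        = Complex.normSq y * (t * (Complex.normSq y / 2)) := by
      rw [Complex.conj_ofReal]
      have h7 : y * conj z * ((Complex.normSq y : ℝ) : ℂ)
          = ((Complex.normSq y : ℝ) : ℂ) * (y * conj z) := by ring
      rw [h7, Complex.re_ofReal_mul, hRyz]
    have e4 : Complex.normSq (y * conj z - ((Complex.normSq y : ℝ) : ℂ))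
        = Complex.normSq y * ((t - 1) * (1 - Complex.normSq y)) := by
      rw [nsub (y * conj z) ((Complex.normSq y : ℝ) : ℂ), Complex.normSq_mul,
        Complex.normSq_conj, hPz, Complex.normSq_ofReal, e3]
      ring
    have e5 : Complex.normSq (ystar - z') * ((t - 1) * (Complex.normSq y * Complex.normSq y))
        = Complex.normSq y * ((t - 1) * (1 - Complex.normSq y)) := by
      calc Complex.normSq (ystar - z') * ((t - 1) * (Complex.normSq y * Complex.normSq y))
          = Complex.normSq ((ystar - z') * (conj z * ((Complex.normSq y : ℝ) : ℂ))) := by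
            rw [Complex.normSq_mul, Complex.normSq_mul, Complex.normSq_conj, hPz,
              Complex.normSq_ofReal]
        _ = Complex.normSq y * ((t - 1) * (1 - Complex.normSq y)) := by rw [e, e4]
    rw [eq_div_iff hYne]
    apply mul_right_cancel₀ htau'
    apply mul_right_cancel₀ hYne
    linear_combination e5
  -- abs versions
  have habsz : (1 : ℝ) - ‖z‖ ^ 2 = 2 - t := by
    rw [Complex.sq_norm, hPz]
    ring
  have habsx : (1 : ℝ) - ‖x‖ ^ 2 = 1 - Complex.normSq x := by
    rw [Complex.sq_norm]
  have habsy : (1 : ℝ) - ‖y‖ ^ 2 = 1 - Complex.normSq y := by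
    rw [Complex.sq_norm]
  have hA : (0 : ℝ) < 1 - Complex.normSq x := by linarith only [hX1]
  have hB : (0 : ℝ) < 1 - Complex.normSq y := by linarith only [hY1]
  have hC : (0 : ℝ) < 2 - t := by linarith only [ht2]
  refine ⟨⟨?_, ?_⟩, ?_, ?_⟩
  · -- rhoB x z = rhoB z y
    unfold rhoB
    congr 1
    congr 1
    have l1 : ‖x - z‖ = Real.sqrt ((t - 1) * (1 - Complex.normSq x)) := by
      rw [norm_sub_rev, Complex.norm_def, nzx]
    have l2 : ‖z - y‖ = Real.sqrt ((t - 1) * (1 - Complex.normSq y)) := by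
      rw [Complex.norm_def, nzy]
    rw [l1, l2, habsz, habsx, habsy]
    rw [arg_simp (le_of_lt htau) hA, mul_comm (Real.sqrt (2 - t)),
      arg_simp (le_of_lt htau) hB]
  · -- rhoB z y = rhoB x y / 2
    unfold rhoB
    rw [mul_div_cancel_left₀ _ (two_ne_zero : (2 : ℝ) ≠ 0)]
    have l2 : ‖z - y‖ = Real.sqrt ((t - 1) * (1 - Complex.normSq y)) := by
      rw [Complex.norm_def, nzy]
    rw [l2, habsz, habsy, mul_comm (Real.sqrt (2 - t)), arg_simp (le_of_lt htau) hB]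
    set s0 : ℝ := Real.sqrt (t - 1) / Real.sqrt (2 - t) with hs0
    have hdouble : 2 * Real.arsinh s0 = Real.arsinh (2 * s0 * Real.sqrt (1 + s0 ^ 2)) := by
      conv_lhs => rw [← Real.arsinh_sinh (2 * Real.arsinh s0)]
      rw [Real.sinh_two_mul, Real.sinh_arsinh, Real.cosh_arsinh]
    rw [hdouble]
    congr 1
    have hs0sq : s0 ^ 2 = (t - 1) / (2 - t) := by
      rw [hs0, div_pow, Real.sq_sqrt (le_of_lt htau), Real.sq_sqrt (le_of_lt hC)]
    have h1s : 1 + s0 ^ 2 = 1 / (2 - t) := by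
      rw [hs0sq]
      field_simp
      norm_num
    rw [h1s, one_div, Real.sqrt_inv]
    have habsxy : ‖x - y‖
        = Real.sqrt (Complex.normSq x + Complex.normSq y
          - 2 * (Complex.normSq x * Complex.normSq y)) := by
      rw [Complex.norm_def, hSxy]
    rw [habsxy, habsx]
    have hS0 : (0 : ℝ) < Complex.normSq x + Complex.normSq y
        - 2 * (Complex.normSq x * Complex.normSq y) := by
      have hm1 : 0 < Complex.normSq x * (1 - Complex.normSq y) := mul_pos hX0 hB
      have hm2 : 0 < Complex.normSq y * (1 - Complex.normSq x) := mul_pos hY0 hA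
      linarith only [hm1, hm2]
    apply sq_cancel
    · positivity
    · positivity
    rw [mul_pow, mul_pow, div_pow, div_pow, mul_pow]
    rw [Real.sq_sqrt (le_of_lt htau), Real.sq_sqrt (le_of_lt hC), Real.sq_sqrt (le_of_lt hS0),
      Real.sq_sqrt (le_of_lt hA), Real.sq_sqrt (le_of_lt hB),
      inv_pow, Real.sq_sqrt (le_of_lt hC)]
    rw [show (2 : ℝ) ^ 2 * ((t - 1) / (2 - t)) * (2 - t)⁻¹
        = (4 * (t - 1)) / ((2 - t) * (2 - t)) from by
      simp only [div_eq_mul_inv, mul_inv]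
      ring]
    rw [div_eq_div_iff (by positivity) (by positivity)]
    linear_combination -hF6
  · -- orthogonality
    rw [Complex.sq_norm, nsub, hrc2, hI5, hca]
    ring
  · -- absolute ratio identity
    rw [Complex.norm_def, Complex.norm_def, Complex.norm_def, Complex.norm_def,
      Complex.norm_def, Complex.norm_def, Complex.norm_def, Complex.norm_def]
    rw [n1x, n2x, nzx, n4x, n1y, n2y, nzy, n4y]
    have hzxy : Complex.normSq (z - x) = (t - 1) * (1 - Complex.normSq x) := nzx
    rw [ratio_helper hA hX0 htau, ratio_helper hB hY0 htau]
end

section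
/- Let x, y ∈ B²∖{0} with 0, x, y noncollinear, and set x* = x/|x|², y* = y/|y|², t_x = √(1/|x|² − 1), t_y = √(1/|y|² − 1). Then the circles S¹(x*, t_x) and S¹(y*, t_y) are orthogonal (i.e., |x* − y*|² = t_x² + t_y²) if and only if cos∠x0y = |x||y|, where ∠x0y is the angle at 0 between the segments [0,x] and [0,y]; equivalently, if and only if x·y = |x|²|y|², where x·y denotes the real inner product on ℂ ≅ ℝ². -/
open Complex ComplexConjugate

/-- For `x, y ∈ B² \ {0}` with `0, x, y` noncollinear, the circles `S¹(x*, t_x)` and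
`S¹(y*, t_y)`, where `x* = x/|x|²`, `t_x = √(1/|x|² - 1)` (and similarly for `y`), are
orthogonal if and only if `cos ∠x0y = |x| |y|`, equivalently `x · y = |x|² |y|²`
(real inner product). -/
theorem orthogonal_inversion_circles (x y : ℂ)
    (hx1 : ‖x‖ < 1) (hy1 : ‖y‖ < 1) (hx0 : x ≠ 0) (hy0 : y ≠ 0)
    (hncol : ¬ Collinear ℝ ({0, x, y} : Set ℂ))
    (xstar ystar : ℂ)
    (hxstar : xstar = x / ((‖x‖ : ℂ) ^ 2))
    (hystar : ystar = y / ((‖y‖ : ℂ) ^ 2))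
    (tx ty : ℝ)
    (htx : tx = Real.sqrt (1 / ‖x‖ ^ 2 - 1))
    (hty : ty = Real.sqrt (1 / ‖y‖ ^ 2 - 1)) :
    (‖xstar - ystar‖ ^ 2 = tx ^ 2 + ty ^ 2 ↔
      Real.cos (InnerProductGeometry.angle x y) = ‖x‖ * ‖y‖) ∧
    (Real.cos (InnerProductGeometry.angle x y) = ‖x‖ * ‖y‖ ↔
      dotR x y = ‖x‖ ^ 2 * ‖y‖ ^ 2) := by

  have hax : 0 < ‖x‖ := by simpa using hx0
  have hay : 0 < ‖y‖ := by simpa using hy0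
  have hinner : (inner ℝ x y : ℝ) = dotR x y := by
    rw [real_inner_eq_re_inner ℂ]
    simp [RCLike.inner_apply, Complex.mul_re, dotR]
    ring
  have h2 : Real.cos (InnerProductGeometry.angle x y) = ‖x‖ * ‖y‖ ↔
      dotR x y = ‖x‖ ^ 2 * ‖y‖ ^ 2 := by
    rw [InnerProductGeometry.cos_angle, hinner,
      div_eq_iff (by positivity)]
    constructor <;> intro h <;> nlinarith [h]
  refine ⟨?_, h2⟩
  rw [h2]
  have ha : ‖x‖ ^ 2 = x.re ^ 2 + x.im ^ 2 := by
    rw [Complex.sq_norm, Complex.normSq_apply]; ring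
  have hb : ‖y‖ ^ 2 = y.re ^ 2 + y.im ^ 2 := by
    rw [Complex.sq_norm, Complex.normSq_apply]; ring
  have ha0 : x.re ^ 2 + x.im ^ 2 ≠ 0 := by rw [← ha]; exact pow_ne_zero _ hax.ne'
  have hb0 : y.re ^ 2 + y.im ^ 2 ≠ 0 := by rw [← hb]; exact pow_ne_zero _ hay.ne'
  have hkey : ‖xstar - ystar‖ ^ 2
      = 1 / ‖x‖ ^ 2 + 1 / ‖y‖ ^ 2
        - 2 * dotR x y / (‖x‖ ^ 2 * ‖y‖ ^ 2) := by
    rw [hxstar, hystar, Complex.sq_norm, Complex.normSq_apply, ha, hb, dotR,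
      ← Complex.ofReal_pow, ← Complex.ofReal_pow, ha, hb]
    simp only [Complex.sub_re, Complex.sub_im, Complex.div_ofReal_re, Complex.div_ofReal_im]
    field_simp
    ring
  have htx2 : tx ^ 2 = 1 / ‖x‖ ^ 2 - 1 := by
    rw [htx, Real.sq_sqrt]
    rw [le_sub_iff_add_le, zero_add, le_div_iff₀ (pow_pos hax 2), one_mul]
    nlinarith
  have hty2 : ty ^ 2 = 1 / ‖y‖ ^ 2 - 1 := by
    rw [hty, Real.sq_sqrt]
    rw [le_sub_iff_add_le, zero_add, le_div_iff₀ (pow_pos hay 2), one_mul]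
    nlinarith
  have hgen : ∀ A B d : ℝ, A ≠ 0 → B ≠ 0 →
      (1/A + 1/B - 2*d/(A*B) = 1/A - 1 + (1/B - 1) ↔ d = A*B) := by
    intro A B d hA hB
    constructor <;> intro h
    · field_simp at h; linarith
    · rw [h]; field_simp; ring
  rw [hkey, htx2, hty2]
  exact hgen _ _ _ (pow_pos hax 2).ne' (pow_pos hay 2).ne'
end

section
/- Let −1 < x < y < 1 be real points of the unit disk, and set m = x + i√(1−x²) and n = y + i√(1−y²), the points of the unit circle vertically above x and y. Then the Euclidean line through m and the complex conjugate of n and the Euclidean line through the complex conjugate of m and n intersect in a real point z ∈ (−1,1), and z is the hyperbolic midpoint of x and y in B², i.e., ρ_{B²}(x,z) = ρ_{B²}(z,y) = ρ_{B²}(x,y)/2. -/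
open Complex ComplexConjugate

lemma rhoB_real (x z : ℝ) : rhoB (x : ℂ) (z : ℂ) =
    2 * Real.arsinh (|x - z| / (Real.sqrt (1 - x ^ 2) * Real.sqrt (1 - z ^ 2))) := by
  rw [rhoB, ← Complex.ofReal_sub, Complex.norm_real, Complex.norm_real,
    Complex.norm_real, Real.norm_eq_abs, Real.norm_eq_abs, Real.norm_eq_abs, _root_.sq_abs, _root_.sq_abs]

/-- For real points `-1 < x < y < 1` of the unit disk, with `m = x + i√(1-x²)` and
`n = y + i√(1-y²)` the points of the unit circle above `x` and `y`, the line through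
`m` and `conj n` and the line through `conj m` and `n` intersect in a real point
`z ∈ (-1, 1)` which is the hyperbolic midpoint of `x` and `y` in `B²`. -/
theorem midpoint_on_diameter_B2 (x y : ℝ)
    (hx : -1 < x) (hxy : x < y) (hy : y < 1)
    (m n : ℂ)
    (hm : m = (x : ℂ) + (Real.sqrt (1 - x ^ 2) : ℂ) * Complex.I)
    (hn : n = (y : ℂ) + (Real.sqrt (1 - y ^ 2) : ℂ) * Complex.I) :
    ∃ z : ℝ, -1 < z ∧ z < 1 ∧
      (z : ℂ) ∈ lineThrough m (conj n) ∧ (z : ℂ) ∈ lineThrough (conj m) n ∧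
      rhoB (x : ℂ) (z : ℂ) = rhoB (z : ℂ) (y : ℂ) ∧
      rhoB (z : ℂ) (y : ℂ) = rhoB (x : ℂ) (y : ℂ) / 2 := by
  have hx1 : (0:ℝ) < 1 - x ^ 2 := by nlinarith
  have hy1 : (0:ℝ) < 1 - y ^ 2 := by nlinarith
  set a := Real.sqrt (1 - x ^ 2) with ha_def
  set b := Real.sqrt (1 - y ^ 2) with hb_def
  have ha2 : a ^ 2 = 1 - x ^ 2 := Real.sq_sqrt hx1.le
  have hb2 : b ^ 2 = 1 - y ^ 2 := Real.sq_sqrt hy1.le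
  have ha : 0 < a := Real.sqrt_pos.mpr hx1
  have hb : 0 < b := Real.sqrt_pos.mpr hy1
  have hab : 0 < a + b := by linarith
  obtain ⟨z, hz_def⟩ : ∃ z : ℝ, z = (x * b + y * a) / (a + b) := ⟨_, rfl⟩
  have hz : z * (a + b) = x * b + y * a := by
    rw [hz_def]; exact div_mul_cancel₀ _ hab.ne'
  have hz1 : -1 < z := by rw [hz_def, lt_div_iff₀ hab]; nlinarith
  have hz2 : z < 1 := by rw [hz_def, div_lt_one hab]; nlinarith
  have hzx : x < z := by rw [hz_def, lt_div_iff₀ hab]; nlinarith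
  have hzy : z < y := by rw [hz_def, div_lt_iff₀ hab]; nlinarith
  have hz3 : (0:ℝ) < 1 - z ^ 2 := by nlinarith
  set c := Real.sqrt (1 - z ^ 2) with hc_def
  have hc2 : c ^ 2 = 1 - z ^ 2 := Real.sq_sqrt hz3.le
  have hc : 0 < c := Real.sqrt_pos.mpr hz3
  have hxy1 : x * y < 1 := by nlinarith
  have hkey : 0 < a * b + 1 - x * y := by nlinarith
  have hc2ab : c ^ 2 * (a + b) ^ 2 = 2 * a * b * (a * b + 1 - x * y) := by
    rw [hc2]
    linear_combination (-(x * b + y * a + z * (a + b))) * hz + (-a ^ 2) * hb2 + (-b ^ 2) * ha2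
  have habC : ((a : ℂ) + b) ≠ 0 := by
    exact_mod_cast (show ((a + b : ℝ) : ℂ) ≠ 0 from Complex.ofReal_ne_zero.mpr hab.ne')
  refine ⟨z, hz1, hz2, ⟨a / (a + b), ?_⟩, ⟨a / (a + b), ?_⟩, ?_, ?_⟩
  · rw [hm, hn, hz_def]
    simp only [map_add, Complex.conj_ofReal, map_mul, Complex.conj_I, Complex.real_smul]
    push_cast
    field_simp
    ring
  · rw [hm, hn, hz_def]
    simp only [map_add, Complex.conj_ofReal, map_mul, Complex.conj_I, Complex.real_smul]
    push_cast
    field_simp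
    ring
  · rw [rhoB_real, rhoB_real, ← ha_def, ← hb_def, ← hc_def]
    congr 1
    rw [abs_sub_comm, abs_of_pos (by linarith : (0:ℝ) < z - x),
      abs_of_neg (by linarith : z - y < 0)]
    rw [Real.arsinh_inj]
    field_simp
    linear_combination hz
  · rw [rhoB_real, rhoB_real, ← ha_def, ← hb_def, ← hc_def]
    rw [abs_of_neg (by linarith : z - y < 0), abs_of_neg (by linarith : x - y < 0)]
    have key : Real.arsinh ((-(x - y)) / (a * b)) =
        2 * Real.arsinh ((-(z - y)) / (c * b)) := by
      have h1 : (y - z) * (a + b) = b * (y - x) := by linear_combination -hz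
      have h2 : (y - x) ^ 2 + 2 * a * b * (a * b + 1 - x * y) = (a * b + 1 - x * y) ^ 2 := by
        linear_combination b ^ 2 * ha2 + (1 - x ^ 2) * hb2
      apply Real.sinh_injective
      rw [Real.sinh_arsinh, Real.sinh_two_mul, Real.sinh_arsinh, Real.cosh_arsinh]
      have hsq : 1 + ((-(z - y)) / (c * b)) ^ 2 =
          ((a * b + 1 - x * y) / ((a + b) * c)) ^ 2 := by
        field_simp
        linear_combination b^2*hc2ab + ((y-z)*(a+b)+b*(y-x))*h1 + b^2*h2
      rw [hsq, Real.sqrt_sq (by positivity)]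
      field_simp
      apply mul_left_cancel₀ hb.ne'
      linear_combination (y - z) * hc2ab - c ^ 2 * (a + b) * h1
    rw [key]; ring
end
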